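/- arXiv:2307.01897 — 5 statements merged into one kernel-verified Lean document; each statement's English description precedes it below -/
import Mathlib

section
/- The map L_d^n → ℤ/Fℤ sending a tuple c to val(c) mod F is a bijection. -/
/-- `F = Σ_{k=0}^n x^(n−k)·y^k`. -/
def Fval (n x y : ℕ) : ℕ := ∑ k ∈ Finset.range (n + 1), x ^ (n - k) * y ^ k

/-- The stable decomposition `v = Σ_{k=0}^n c_k·x^(n−k)·y^k + m·y^(n+1)`
with digits `c_k ∈ {0,…,y−1}`. -/
def IsStableDecomp (n x y : ℕ) (v : ℤ) (c : Fin (n + 1) → ℕ) (m : ℤ) : Prop :=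
  (∀ k : Fin (n + 1), c k < y) ∧
    v = (∑ k : Fin (n + 1), (c k : ℤ) * (x : ℤ) ^ (n - (k : ℕ)) * (y : ℤ) ^ (k : ℕ))
          + m * (y : ℤ) ^ (n + 1)

/-- `L_d^n`: tuples `(c_0,…,c_{n+1})` with `c_{n+1} = 0` matched by
`[0,y−1]*·0·[1,x]*·0`. -/
def Ld (n x y : ℕ) : Set (Fin (n + 2) → ℕ) :=
  {c | c (Fin.last (n + 1)) = 0 ∧ ∃ k : Fin (n + 1),
    (∀ i : Fin (n + 2), (i : ℕ) < (k : ℕ) → c i < y) ∧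
    c k.castSucc = 0 ∧
    (∀ i : Fin (n + 2), (k : ℕ) < (i : ℕ) → (i : ℕ) ≤ n → 1 ≤ c i ∧ c i ≤ x)}

/-- `L_a^n`: tuples `(c_0,…,c_{n+1})` with `c_{n+1} = 0` matched by
`[1,y]*·0·[0,x−1]*·0`. -/
def La (n x y : ℕ) : Set (Fin (n + 2) → ℕ) :=
  {c | c (Fin.last (n + 1)) = 0 ∧ ∃ k : Fin (n + 1),
    (∀ i : Fin (n + 2), (i : ℕ) < (k : ℕ) → 1 ≤ c i ∧ c i ≤ y) ∧
    c k.castSucc = 0 ∧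
    (∀ i : Fin (n + 2), (k : ℕ) < (i : ℕ) → (i : ℕ) ≤ n → c i < x)}

/-- The value `val(c) = Σ_{k=0}^n c_k·x^(n−k)·y^k` of a tuple. -/
def tupleVal (n x y : ℕ) (c : Fin (n + 2) → ℕ) : ℕ :=
  ∑ k : Fin (n + 1), c k.castSucc * x ^ (n - (k : ℕ)) * y ^ (k : ℕ)

/-- `G = {val(c) : c ∈ L_d^n}` viewed as a set of integers. -/
def Gset (n x y : ℕ) : Set ℤ := {w | ∃ c ∈ Ld n x y, (tupleVal n x y c : ℤ) = w}

/-- Arcmonic value `g_k(j)` of arc number `j` at vertex `u_k`. -/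
def gk (n x y k j : ℕ) : ℕ :=
  if j ≤ x then j * x ^ (n - k) * y ^ k else (x + y - j) * x ^ (n - k + 1) * y ^ (k - 1)

/-- Arcmonic value of a rotor configuration `ρ : {1,…,n} → {0,…,x+y−1}`,
encoded with `ρ k` the arc chosen at vertex `u_{k+1}` for `k : Fin n`. -/
def gRotor (n x y : ℕ) (ρ : Fin n → ℕ) : ℕ := ∑ k : Fin n, gk n x y ((k : ℕ) + 1) (ρ k)


/-- sum of digits `d` over `Fin (m+1)` with weights `x^(m-i) y^i` -/
def dsum (x y m : ℕ) (d : Fin (m + 1) → ℕ) : ℕ :=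
  ∑ i : Fin (m + 1), d i * x ^ (m - (i : ℕ)) * y ^ (i : ℕ)

/-- digit pattern of an `Ld` word restricted to its first `m+1` digits -/
def LdPat (x y m : ℕ) (c : Fin (m + 1) → ℕ) : Prop :=
  ∃ k : Fin (m + 1), (∀ i : Fin (m + 1), (i : ℕ) < (k : ℕ) → c i < y) ∧ c k = 0 ∧
    (∀ i : Fin (m + 1), (k : ℕ) < (i : ℕ) → 1 ≤ c i ∧ c i ≤ x)

lemma dsum_zero (x y : ℕ) (d : Fin 1 → ℕ) : dsum x y 0 d = d 0 := by
  simp [dsum]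

lemma dsum_succ (x y m : ℕ) (d : Fin (m + 2) → ℕ) :
    dsum x y (m + 1) d = d 0 * x ^ (m + 1) + y * dsum x y m (fun j => d j.succ) := by
  unfold dsum
  rw [Fin.sum_univ_succ]
  simp only [Fin.val_zero, Nat.sub_zero, pow_zero, mul_one, Fin.val_succ]
  congr 1
  rw [Finset.mul_sum]
  refine Finset.sum_congr rfl fun j _ => ?_
  have hj : m + 1 - ((j : ℕ) + 1) = m - (j : ℕ) := by omega
  rw [hj, pow_succ]
  ring

lemma peel (x y m : ℕ) (hy : 0 < y) (hcop : Nat.Coprime x y)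
    (c c'' : Fin (m + 2) → ℕ) (s : ℕ) (hc0 : c 0 < y)
    (h : dsum x y (m + 1) c = dsum x y (m + 1) c'' + s * x ^ (m + 2)) :
    ∃ q : ℕ, c'' 0 + s * x = c 0 + y * q ∧
      dsum x y m (fun j => c j.succ)
        = dsum x y m (fun j => c'' j.succ) + q * x ^ (m + 1) := by
  rw [dsum_succ, dsum_succ] at h
  set Sc := dsum x y m (fun j => c j.succ) with hSc
  set Sc'' := dsum x y m (fun j => c'' j.succ) with hSc''
  have h' : c 0 * x ^ (m + 1) + y * Sc = (c'' 0 + s * x) * x ^ (m + 1) + y * Sc'' := by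
    rw [h]; ring
  have hm : (c 0 * x ^ (m + 1)) % y = ((c'' 0 + s * x) * x ^ (m + 1)) % y := by
    have := congrArg (· % y) h'
    simpa [Nat.add_mul_mod_self_left] using this
  have hcop' : Nat.Coprime (x ^ (m + 1)) y := hcop.pow_left _
  have hm2 : c 0 ≡ c'' 0 + s * x [MOD y] := Nat.ModEq.cancel_right_of_coprime hcop'.symm hm
  have h3 : (c'' 0 + s * x) % y = c 0 % y := hm2.symm
  rw [Nat.mod_eq_of_lt hc0] at h3
  refine ⟨(c'' 0 + s * x) / y, ?_, ?_⟩
  · have h4 := Nat.div_add_mod (c'' 0 + s * x) y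
    rw [h3] at h4
    rw [Nat.add_comm] at h4
    exact h4.symm
  · have h5 : c'' 0 + s * x = c 0 + y * ((c'' 0 + s * x) / y) := by
      have h4 := Nat.div_add_mod (c'' 0 + s * x) y
      rw [h3] at h4
      rw [Nat.add_comm] at h4
      exact h4.symm
    rw [h5] at h'
    have h6 : c 0 * x ^ (m + 1) + y * Sc
        = c 0 * x ^ (m + 1) + y * (Sc'' + ((c'' 0 + s * x) / y) * x ^ (m + 1)) := by
      rw [h']; ring
    have h7 := Nat.add_left_cancel h6
    exact Nat.eq_of_mul_eq_mul_left hy h7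

/-- No all-`≤ x` word equals an all-`≥ 1` word plus a positive multiple of `x^(m+1)`. -/
lemma lemD (x y : ℕ) (hx : 0 < x) (hxy : x < y) (hcop : Nat.Coprime x y) (m : ℕ) :
    ∀ (c c'' : Fin (m + 1) → ℕ) (s : ℕ), (∀ i, c i ≤ x) → (∀ i, 1 ≤ c'' i) → 1 ≤ s →
    dsum x y m c ≠ dsum x y m c'' + s * x ^ (m + 1) := by
  induction m with
  | zero =>
    intro c c'' s hc hc'' hs h
    rw [dsum_zero, dsum_zero, pow_one] at h
    have h1 := hc 0
    have h2 := hc'' 0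
    have h3 : x ≤ s * x := Nat.le_mul_of_pos_left x hs
    generalize s * x = w at h h3
    omega
  | succ m ih =>
    intro c c'' s hc hc'' hs h
    have hy : 0 < y := lt_trans hx hxy
    obtain ⟨q, hq, h2⟩ := peel x y m hy hcop c c'' s (lt_of_le_of_lt (hc 0) hxy) h
    have hq1 : 1 ≤ q := by
      have h3 : x ≤ s * x := Nat.le_mul_of_pos_left x hs
      have h4 := hc 0
      have h5 := hc'' 0
      rcases Nat.eq_zero_or_pos q with rfl | hpos
      · generalize s * x = w at hq h3
        omega
      · exact hpos
    exact ih (fun j => c j.succ) (fun j => c'' j.succ) q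
      (fun j => hc j.succ) (fun j => hc'' j.succ) hq1 h2

/-- No `Ld`-pattern word equals an all-`≥ 1` word plus a multiple of `x^(m+1)`. -/
lemma lemC (x y : ℕ) (hx : 0 < x) (hxy : x < y) (hcop : Nat.Coprime x y) (m : ℕ) :
    ∀ (c c'' : Fin (m + 1) → ℕ) (s : ℕ), LdPat x y m c → (∀ i, 1 ≤ c'' i) →
    dsum x y m c ≠ dsum x y m c'' + s * x ^ (m + 1) := by
  induction m with
  | zero =>
    intro c c'' s hpat hc'' h
    obtain ⟨k, _, hk2, _⟩ := hpat
    have hk : k = 0 := Fin.fin_one_eq_zero k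
    rw [hk] at hk2
    rw [dsum_zero, dsum_zero, pow_one, hk2] at h
    have h2 := hc'' 0
    generalize s * x = w at h
    omega
  | succ m ih =>
    intro c c'' s hpat hc'' h
    have hy : 0 < y := lt_trans hx hxy
    obtain ⟨k, hk1, hk2, hk3⟩ := hpat
    have hc0 : c 0 < y := by
      rcases Nat.eq_zero_or_pos (k : ℕ) with hk0 | hkpos
      · have : (0 : Fin (m + 2)) = k := Fin.ext (by simp [hk0])
        rw [this, hk2]; exact hy
      · exact hk1 0 (by simpa using hkpos)
    obtain ⟨q, hq, h2⟩ := peel x y m hy hcop c c'' s hc0 h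
    rcases Nat.eq_zero_or_pos (k : ℕ) with hk0 | hkpos
    · -- break at position 0 : tail is all in [1,x], use lemD
      have hc00 : c 0 = 0 := by
        have : (0 : Fin (m + 2)) = k := Fin.ext (by simp [hk0])
        rw [this, hk2]
      have hq1 : 1 ≤ q := by
        have h5 := hc'' 0
        rcases Nat.eq_zero_or_pos q with rfl | hpos
        · rw [hc00] at hq
          generalize s * x = w at hq
          omega
        · exact hpos
      have htail : ∀ j : Fin (m + 1), (fun j : Fin (m + 1) => c j.succ) j ≤ x := by
        intro j
        have hlt : (k : ℕ) < ((j.succ : Fin (m + 2)) : ℕ) := by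
          rw [Fin.val_succ]; omega
        exact (hk3 j.succ hlt).2
      exact lemD x y hx hxy hcop m (fun j => c j.succ) (fun j => c'' j.succ) q
        htail (fun j => hc'' j.succ) hq1 h2
    · -- break at position ≥ 1 : tail is an Ld pattern
      have hklt : (k : ℕ) < m + 2 := k.isLt
      set k' : Fin (m + 1) := ⟨(k : ℕ) - 1, by omega⟩ with hk'
      have hpat' : LdPat x y m (fun j : Fin (m + 1) => c j.succ) := by
        refine ⟨k', ?_, ?_, ?_⟩
        · intro j hj
          refine hk1 j.succ ?_
          rw [Fin.val_succ]
          have : (j : ℕ) < (k' : ℕ) := hj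
          rw [hk'] at this
          simp only [] at this
          omega
        · show c k'.succ = 0
          have hkk : k'.succ = k := by
            apply Fin.ext
            rw [Fin.val_succ, hk']
            simp only []
            omega
          rw [hkk]; exact hk2
        · intro j hj
          refine hk3 j.succ ?_
          rw [Fin.val_succ]
          have : (k' : ℕ) < (j : ℕ) := hj
          rw [hk'] at this
          simp only [] at this
          omega
      exact ih (fun j => c j.succ) (fun j => c'' j.succ) q hpat' (fun j => hc'' j.succ) h2

/-- Uniqueness of digits `< y`. -/
lemma lemA (x y : ℕ) (hy : 0 < y) (hcop : Nat.Coprime x y) (m : ℕ) :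
    ∀ (c c' : Fin (m + 1) → ℕ), (∀ i, c i < y) → (∀ i, c' i < y) →
    dsum x y m c = dsum x y m c' → ∀ i, c i = c' i := by
  induction m with
  | zero =>
    intro c c' _ _ h i
    rw [dsum_zero, dsum_zero] at h
    have : i = 0 := Fin.fin_one_eq_zero i
    rw [this]; exact h
  | succ m ih =>
    intro c c' hc hc' h i
    obtain ⟨q, hq, h2⟩ := peel x y m hy hcop c c' 0 (hc 0)
      (by simpa using h)
    have hq0 : q = 0 := by
      have h3 := hc' 0
      have h4 := hc 0
      rcases Nat.eq_zero_or_pos q with rfl | hpos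
      · rfl
      · have : y ≤ y * q := Nat.le_mul_of_pos_right y hpos
        generalize y * q = w at hq this
        omega
    rw [hq0] at hq h2
    simp only [Nat.mul_zero, Nat.add_zero, Nat.zero_mul] at hq h2
    rcases Fin.eq_zero_or_eq_succ i with rfl | ⟨j, rfl⟩
    · omega
    · exact ih (fun j => c j.succ) (fun j => c' j.succ)
        (fun j => hc j.succ) (fun j => hc' j.succ) h2 j


lemma Fval_eq_fin (n x y : ℕ) :
    Fval n x y = ∑ i : Fin (n + 1), x ^ (n - (i : ℕ)) * y ^ (i : ℕ) :=
  (Fin.sum_univ_eq_sum_range _ _).symm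

lemma dsum_shift (n x y t : ℕ) (d : Fin (n + 1) → ℕ) :
    dsum x y n (fun i => d i + t) = dsum x y n d + t * Fval n x y := by
  rw [Fval_eq_fin, dsum, dsum, Finset.mul_sum, ← Finset.sum_add_distrib]
  refine Finset.sum_congr rfl fun i _ => ?_
  ring

lemma ldpat_lt_y (x y m : ℕ) (hxy : x < y) (hy : 0 < y) {c : Fin (m + 1) → ℕ}
    (h : LdPat x y m c) : ∀ i, c i < y := by
  obtain ⟨k, h1, h2, h3⟩ := h
  intro i
  rcases lt_trichotomy (i : ℕ) (k : ℕ) with hl | he | hg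
  · exact h1 i hl
  · have : i = k := Fin.ext he
    rw [this, h2]; exact hy
  · exact lt_of_le_of_lt (h3 i hg).2 hxy

/-- the finset of `Ld` words with break at `k` -/
def brkF (n x y : ℕ) (k : Fin (n + 1)) : Finset (Fin (n + 2) → ℕ) :=
  Fintype.piFinset (fun i : Fin (n + 2) =>
    if (i : ℕ) < (k : ℕ) then Finset.range y
    else if (i : ℕ) = (k : ℕ) then {0}
    else if (i : ℕ) ≤ n then Finset.Icc 1 x else {0})

lemma card_brkF (n x y : ℕ) (k : Fin (n + 1)) :
    (brkF n x y k).card = y ^ (k : ℕ) * x ^ (n - (k : ℕ)) := by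
  have hkn : (k : ℕ) ≤ n := Fin.is_le k
  rw [brkF, Fintype.card_piFinset]
  have hcard : ∀ i : Fin (n + 2),
      (if (i : ℕ) < (k : ℕ) then Finset.range y
        else if (i : ℕ) = (k : ℕ) then ({0} : Finset ℕ)
        else if (i : ℕ) ≤ n then Finset.Icc 1 x else {0}).card
      = (fun j : ℕ => if j < (k : ℕ) then y else if j = (k : ℕ) then 1
          else if j ≤ n then x else 1) (i : ℕ) := by
    intro i
    dsimp only
    split_ifs <;> simp
  rw [Finset.prod_congr rfl (fun i _ => hcard i),
    Fin.prod_univ_eq_prod_range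
      (fun j : ℕ => if j < (k : ℕ) then y else if j = (k : ℕ) then 1
        else if j ≤ n then x else 1) (n + 2)]
  rw [Finset.prod_range_succ]
  rw [if_neg (by omega), if_neg (by omega), if_neg (by omega), mul_one]
  rw [← Finset.prod_range_mul_prod_Ico _ (show (k : ℕ) ≤ n + 1 by omega)]
  have h1 : (∏ j ∈ Finset.range (k : ℕ),
      (if j < (k : ℕ) then y else if j = (k : ℕ) then 1 else if j ≤ n then x else 1))
      = y ^ (k : ℕ) := by
    rw [Finset.prod_congr rfl (fun j hj => if_pos (Finset.mem_range.mp hj)),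
      Finset.prod_const, Finset.card_range]
  have h2 : (∏ j ∈ Finset.Ico (k : ℕ) (n + 1),
      (if j < (k : ℕ) then y else if j = (k : ℕ) then 1 else if j ≤ n then x else 1))
      = x ^ (n - (k : ℕ)) := by
    rw [Finset.prod_eq_prod_Ico_succ_bot (show (k : ℕ) < n + 1 by omega)]
    rw [if_neg (by omega), if_pos rfl, one_mul]
    have h3 : ∀ j ∈ Finset.Ico ((k : ℕ) + 1) (n + 1),
        (if j < (k : ℕ) then y else if j = (k : ℕ) then 1 else if j ≤ n then x else 1) = x := by
      intro j hj
      rw [Finset.mem_Ico] at hj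
      rw [if_neg (by omega), if_neg (by omega), if_pos (by omega)]
    rw [Finset.prod_congr rfl h3, Finset.prod_const, Nat.card_Ico]
    congr 1
    omega
  rw [h1, h2]

lemma mem_brkF_iff (n x y : ℕ) (c : Fin (n + 2) → ℕ) :
    (c ∈ Finset.univ.biUnion (brkF n x y)) ↔ c ∈ Ld n x y := by
  rw [Finset.mem_biUnion]
  constructor
  · rintro ⟨k, -, hk⟩
    rw [brkF, Fintype.mem_piFinset] at hk
    have hkn : (k : ℕ) ≤ n := Fin.is_le k
    constructor
    · have := hk (Fin.last (n + 1))
      rw [Fin.val_last] at this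
      rw [if_neg (by omega), if_neg (by omega), if_neg (by omega)] at this
      simpa using this
    · refine ⟨k, ?_, ?_, ?_⟩
      · intro i hi
        have := hk i
        rw [if_pos hi] at this
        simpa using this
      · have := hk k.castSucc
        rw [Fin.coe_castSucc] at this
        rw [if_neg (by omega), if_pos rfl] at this
        simpa using this
      · intro i h1 h2
        have := hk i
        rw [if_neg (by omega), if_neg (by omega), if_pos h2] at this
        simpa using this
  · rintro ⟨hlast, k, h1, h2, h3⟩
    refine ⟨k, Finset.mem_univ _, ?_⟩
    rw [brkF, Fintype.mem_piFinset]
    intro i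
    have hkn : (k : ℕ) ≤ n := Fin.is_le k
    have hin : (i : ℕ) < n + 2 := i.isLt
    split_ifs with ha hb hc
    · simpa using h1 i ha
    · have : i = k.castSucc := Fin.ext (by rw [Fin.coe_castSucc]; exact hb)
      rw [this]
      simpa using h2
    · simpa using h3 i (by omega) hc
    · have : i = Fin.last (n + 1) := Fin.ext (by rw [Fin.val_last]; omega)
      rw [this]
      simpa using hlast

lemma brkF_disjoint (n x y : ℕ) {k k' : Fin (n + 1)} (h : (k : ℕ) < (k' : ℕ))
    (c : Fin (n + 2) → ℕ) (h1 : c ∈ brkF n x y k) : c ∉ brkF n x y k' := by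
  intro h2
  rw [brkF, Fintype.mem_piFinset] at h1 h2
  have hkn : (k' : ℕ) ≤ n := Fin.is_le k'
  have ha := h1 k'.castSucc
  have hb := h2 k'.castSucc
  rw [Fin.coe_castSucc] at ha hb
  rw [if_neg (by omega), if_neg (by omega), if_pos (by omega), Finset.mem_Icc] at ha
  rw [if_neg (by omega), if_pos rfl, Finset.mem_singleton] at hb
  omega

lemma ld_to_pat (n x y : ℕ) (c : Fin (n + 2) → ℕ) (hc : c ∈ Ld n x y) :
    LdPat x y n (fun i : Fin (n + 1) => c i.castSucc) := by
  obtain ⟨-, k, h1, h2, h3⟩ := hc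
  refine ⟨k, ?_, h2, ?_⟩
  · intro i hi
    exact h1 i.castSucc (by rwa [Fin.coe_castSucc])
  · intro i hi
    exact h3 i.castSucc (by rwa [Fin.coe_castSucc]) (by rw [Fin.coe_castSucc]; exact Fin.is_le i)

lemma tupleVal_eq_dsum (n x y : ℕ) (c : Fin (n + 2) → ℕ) :
    tupleVal n x y c = dsum x y n (fun i : Fin (n + 1) => c i.castSucc) := rfl

/-- The map `L_d^n → ℤ/Fℤ` sending a tuple `c` to `val(c) mod F`
is a bijection. -/
theorem val_mod_F_bijective
    (n x y : ℕ) (hn : 1 ≤ n) (hx : 0 < x) (hxy : x < y) (hcop : Nat.Coprime x y) :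
    Function.Bijective
      (fun c : ↥(Ld n x y) => (tupleVal n x y c.val : ZMod (Fval n x y))) := by
  have hy : 0 < y := lt_trans hx hxy
  have hF : 0 < Fval n x y := by
    rw [Fval]
    refine Finset.sum_pos (fun k hk => ?_) ⟨0, by simp⟩
    positivity
  haveI : NeZero (Fval n x y) := ⟨hF.ne'⟩
  letI fL : Fintype ↥(Ld n x y) :=
    Fintype.ofFinset (Finset.univ.biUnion (brkF n x y)) (mem_brkF_iff n x y)
  rw [Fintype.bijective_iff_injective_and_card]
  constructor
  · rintro ⟨c, hc⟩ ⟨c', hc'⟩ h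
    simp only at h
    have hmod : tupleVal n x y c ≡ tupleVal n x y c' [MOD Fval n x y] :=
      (ZMod.natCast_eq_natCast_iff _ _ _).mp h
    rw [tupleVal_eq_dsum, tupleVal_eq_dsum] at hmod
    have d : Fin (n + 1) → ℕ := fun i => c i.castSucc
    have hpat : LdPat x y n (fun i : Fin (n + 1) => c i.castSucc) := ld_to_pat n x y c hc
    have hpat' : LdPat x y n (fun i : Fin (n + 1) => c' i.castSucc) := ld_to_pat n x y c' hc'
    have hmain : dsum x y n (fun i : Fin (n + 1) => c i.castSucc)
        = dsum x y n (fun i : Fin (n + 1) => c' i.castSucc) := by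
      rcases le_total (dsum x y n (fun i : Fin (n + 1) => c i.castSucc))
        (dsum x y n (fun i : Fin (n + 1) => c' i.castSucc)) with hle | hle
      · obtain ⟨t, ht⟩ := (Nat.modEq_iff_dvd' hle).mp hmod
        have hcm : Fval n x y * t = t * Fval n x y := Nat.mul_comm _ _
        have ht' : dsum x y n (fun i : Fin (n + 1) => c' i.castSucc)
            = dsum x y n (fun i : Fin (n + 1) => c i.castSucc) + t * Fval n x y := by
          omega
        rcases Nat.eq_zero_or_pos t with rfl | ht1
        · omega
        · exact absurd
            (show dsum x y n (fun i : Fin (n + 1) => c' i.castSucc)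
                = dsum x y n (fun i : Fin (n + 1) => c i.castSucc + t) + 0 * x ^ (n + 1) by
              rw [dsum_shift, zero_mul, add_zero]; exact ht')
            (lemC x y hx hxy hcop n _ _ 0 hpat' (fun i => by omega))
      · obtain ⟨t, ht⟩ := (Nat.modEq_iff_dvd' hle).mp hmod.symm
        have hcm : Fval n x y * t = t * Fval n x y := Nat.mul_comm _ _
        have ht' : dsum x y n (fun i : Fin (n + 1) => c i.castSucc)
            = dsum x y n (fun i : Fin (n + 1) => c' i.castSucc) + t * Fval n x y := by
          omega
        rcases Nat.eq_zero_or_pos t with rfl | ht1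
        · omega
        · exact absurd
            (show dsum x y n (fun i : Fin (n + 1) => c i.castSucc)
                = dsum x y n (fun i : Fin (n + 1) => c' i.castSucc + t) + 0 * x ^ (n + 1) by
              rw [dsum_shift, zero_mul, add_zero]; exact ht')
            (lemC x y hx hxy hcop n _ _ 0 hpat (fun i => by omega))
    have key := lemA x y hy hcop n _ _ (ldpat_lt_y x y n hxy hy hpat)
      (ldpat_lt_y x y n hxy hy hpat') hmain
    refine Subtype.ext ?_
    show c = c'
    funext i
    refine Fin.lastCases ?_ ?_ i
    · rw [hc.1, hc'.1]
    · exact key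
  · rw [ZMod.card]
    have hcard : Fintype.card ↥(Ld n x y) = (Finset.univ.biUnion (brkF n x y)).card :=
      Fintype.card_ofFinset _ _
    rw [hcard, Finset.card_biUnion]
    · rw [Fval, ← Fin.sum_univ_eq_sum_range (fun k => x ^ (n - k) * y ^ k) (n + 1)]
      refine Finset.sum_congr rfl fun k _ => ?_
      rw [card_brkF, mul_comm]
    · intro k _ k' _ hne
      rw [Function.onFun, Finset.disjoint_left]
      intro c hck hck'
      rcases lt_trichotomy (k : ℕ) (k' : ℕ) with hlt | heq | hgt
      · exact brkF_disjoint n x y hlt c hck hck'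
      · exact hne (Fin.ext heq)
      · exact brkF_disjoint n x y hgt c hck' hck
end

section
/- Every v ∈ G satisfies 0 ≤ v ≤ x·Σ_{k=1}^n x^(n−k)·y^k, this maximum is attained by an element of G, and x·Σ_{k=1}^n x^(n−k)·y^k < x·F. -/
/-- Every `v ∈ G` satisfies `0 ≤ v ≤ x·Σ_{k=1}^n x^(n−k)·y^k`,
this maximum is attained by an element of `G`, and
`x·Σ_{k=1}^n x^(n−k)·y^k < x·F`. -/
theorem G_bounds
    (n x y : ℕ) (hn : 1 ≤ n) (hx : 0 < x) (hxy : x < y) (hcop : Nat.Coprime x y) :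
    (∀ v ∈ Gset n x y,
        0 ≤ v ∧ v ≤ (x * ∑ k ∈ Finset.Icc 1 n, x ^ (n - k) * y ^ k : ℕ)) ∧
    ((x * ∑ k ∈ Finset.Icc 1 n, x ^ (n - k) * y ^ k : ℕ) : ℤ) ∈ Gset n x y ∧
    x * ∑ k ∈ Finset.Icc 1 n, x ^ (n - k) * y ^ k < x * Fval n x y := by
  classical
  have hIcc : Finset.Icc 1 n = Finset.Ico 1 (n + 1) := (Finset.Ico_add_one_right_eq_Icc 1 n).symm
  refine ⟨?_, ?_, ?_⟩
  · rintro v ⟨c, ⟨hlast, k0, h1, h2, h3⟩, rfl⟩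
    refine ⟨Int.ofNat_nonneg _, ?_⟩
    have hnat : tupleVal n x y c ≤ x * ∑ k ∈ Finset.Icc 1 n, x ^ (n - k) * y ^ k := by
      set K : ℕ := (k0 : ℕ) with hKdef
      have hKn : K ≤ n := Nat.lt_succ_iff.mp k0.isLt
      set d : ℕ → ℕ := fun i => if h : i < n + 1 then c ((⟨i, h⟩ : Fin (n + 1)).castSucc) else 0
        with hd
      set g : ℕ → ℕ := fun i => d i * x ^ (n - i) * y ^ i with hg
      have hval : tupleVal n x y c = ∑ i ∈ Finset.range (n + 1), g i := by
        rw [tupleVal, ← Fin.sum_univ_eq_sum_range g (n + 1)]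
        refine Finset.sum_congr rfl fun i _ => ?_
        simp only [hg, hd, i.isLt, dif_pos, Fin.eta]
      have hdK : d K = 0 := by
        show (if h : K < n + 1 then c ((⟨K, h⟩ : Fin (n + 1)).castSucc) else 0) = 0
        rw [dif_pos k0.isLt]
        have he : (⟨K, k0.isLt⟩ : Fin (n + 1)) = k0 := Fin.ext rfl
        rw [he]; exact h2
      -- bound on the low part
      have hlow : ∑ i ∈ Finset.range K, g i
          ≤ ∑ i ∈ Finset.range K, x * x ^ (n - (1 + i)) * y ^ (1 + i) := by
        refine Finset.sum_le_sum fun i hi => ?_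
        have hiK : i < K := Finset.mem_range.mp hi
        have hin : i < n + 1 := by omega
        have hci : d i < y := by
          have := h1 ((⟨i, hin⟩ : Fin (n + 1)).castSucc) (by simpa using hiK)
          simpa [hd, hin, Nat.lt_succ_iff.mp hin] using this
        have hpow : x * x ^ (n - (1 + i)) = x ^ (n - i) := by
          have : n - i = (n - (1 + i)) + 1 := by omega
          rw [this, pow_succ]; ring
        rw [hg]
        calc d i * x ^ (n - i) * y ^ i ≤ y * x ^ (n - i) * y ^ i := by
              exact Nat.mul_le_mul_right _ (Nat.mul_le_mul_right _ hci.le)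
          _ = x * x ^ (n - (1 + i)) * y ^ (1 + i) := by
              rw [hpow, pow_add]; ring
      have hshift : ∑ i ∈ Finset.range K, x * x ^ (n - (1 + i)) * y ^ (1 + i)
          = ∑ j ∈ Finset.Ico 1 (K + 1), x * x ^ (n - j) * y ^ j := by
        rw [Finset.sum_Ico_eq_sum_range]; simp
      -- bound on the high part
      have hhigh : ∑ i ∈ Finset.Ico (K + 1) (n + 1), g i
          ≤ ∑ i ∈ Finset.Ico (K + 1) (n + 1), x * x ^ (n - i) * y ^ i := by
        refine Finset.sum_le_sum fun i hi => ?_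
        obtain ⟨hi1, hi2⟩ := Finset.mem_Ico.mp hi
        have hin : i < n + 1 := hi2
        have hci : d i ≤ x := by
          have := h3 ((⟨i, hin⟩ : Fin (n + 1)).castSucc) (by simpa using hi1) (by simpa using Nat.lt_succ_iff.mp hi2)
          simpa [hd, hin, Nat.lt_succ_iff.mp hin] using this.2
        exact Nat.mul_le_mul_right _ (Nat.mul_le_mul_right _ hci)
      have hsplit : ∑ i ∈ Finset.range (n + 1), g i
          = ∑ i ∈ Finset.range K, g i + g K + ∑ i ∈ Finset.Ico (K + 1) (n + 1), g i := by
        rw [← Finset.sum_range_add_sum_Ico g (show K + 1 ≤ n + 1 by omega),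
          Finset.sum_range_succ]
      have hgK : g K = 0 := by simp [hg, hdK]
      calc tupleVal n x y c
          = ∑ i ∈ Finset.range K, g i + g K + ∑ i ∈ Finset.Ico (K + 1) (n + 1), g i := by
            rw [hval, hsplit]
        _ ≤ ∑ j ∈ Finset.Ico 1 (K + 1), x * x ^ (n - j) * y ^ j + 0
            + ∑ i ∈ Finset.Ico (K + 1) (n + 1), x * x ^ (n - i) * y ^ i := by
            exact add_le_add (add_le_add (hshift ▸ hlow) hgK.le) hhigh
        _ = ∑ j ∈ Finset.Ico 1 (n + 1), x * x ^ (n - j) * y ^ j := by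
            rw [add_zero, Finset.sum_Ico_consecutive _ (by omega) (by omega)]
        _ = x * ∑ k ∈ Finset.Icc 1 n, x ^ (n - k) * y ^ k := by
            rw [hIcc, Finset.mul_sum]; exact Finset.sum_congr rfl fun i _ => by ring
    exact_mod_cast hnat
  · refine ⟨fun i => if 1 ≤ (i : ℕ) ∧ (i : ℕ) ≤ n then x else 0, ⟨?_, ⟨0, ?_, ?_, ?_⟩⟩, ?_⟩
    · simp [Fin.last]
    · intro i hi; simp at hi
    · simp
    · intro i hi1 hi2
      have hge : 1 ≤ (i : ℕ) := by simp at hi1; omega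
      simp only [hge, hi2, and_self, if_true]
      exact ⟨hx, le_rfl⟩
    · have : tupleVal n x y (fun i => if 1 ≤ (i : ℕ) ∧ (i : ℕ) ≤ n then x else 0)
          = x * ∑ k ∈ Finset.Icc 1 n, x ^ (n - k) * y ^ k := by
        rw [tupleVal]
        simp only [Fin.coe_castSucc]
        rw [Fin.sum_univ_eq_sum_range
            (fun i => (if 1 ≤ i ∧ i ≤ n then x else 0) * x ^ (n - i) * y ^ i) (n + 1),
          ← Finset.sum_range_add_sum_Ico _ (show 1 ≤ n + 1 by omega)]
        rw [hIcc, Finset.mul_sum]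
        have h0 : ∑ i ∈ Finset.range 1, (if 1 ≤ i ∧ i ≤ n then x else 0) * x ^ (n - i) * y ^ i = 0 := by
          simp
        rw [h0, zero_add]
        refine Finset.sum_congr rfl fun i hi => ?_
        obtain ⟨hi1, hi2⟩ := Finset.mem_Ico.mp hi
        rw [if_pos ⟨hi1, by omega⟩]; ring
      exact_mod_cast congrArg (Nat.cast : ℕ → ℤ) this
  · have hF : Fval n x y = x ^ n + ∑ k ∈ Finset.Icc 1 n, x ^ (n - k) * y ^ k := by
      rw [Fval, hIcc, ← Finset.sum_range_add_sum_Ico _ (show 1 ≤ n + 1 by omega)]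
      simp
    rw [hF, Nat.mul_add]
    have : 0 < x * x ^ n := Nat.mul_pos hx (pow_pos hx n)
    omega
end

section
/- For every integer t there is a unique integer m such that t + m·F ∈ G, and this m satisfies ⌈−t/F⌉ ≤ m ≤ ⌈−t/F⌉ + x − 1. -/
/-! ### Auxiliary machinery -/

private def lamSeq (x y : ℕ) (d : ℕ → ℤ) : ℕ → ℤ
  | 0 => d 0 / (y : ℤ)
  | (i+1) => (d (i+1) + (x : ℤ) * lamSeq x y d i) / (y : ℤ)

private lemma lam_exists (n x y : ℕ) (hx : 0 < x) (hxy : x < y) (hcop : Nat.Coprime x y)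
    (d : ℕ → ℤ)
    (htot : ∑ i ∈ Finset.range (n+1), d i * (x:ℤ)^(n-i) * (y:ℤ)^i = 0) :
    ∃ lam : ℕ → ℤ, (y:ℤ) * lam 0 = d 0 ∧
      (∀ i, 1 ≤ i → i ≤ n → (y:ℤ) * lam i = d i + (x:ℤ) * lam (i-1)) ∧ lam n = 0 := by
  have hy0 : (0:ℤ) < (y:ℤ) := by exact_mod_cast hx.trans hxy
  have hy0' : (y:ℤ) ≠ 0 := hy0.ne'
  have hcxy : IsCoprime (x:ℤ) (y:ℤ) := Nat.isCoprime_iff_coprime.mpr hcop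
  set V : ℕ → ℤ := fun i => ∑ j ∈ Finset.range (i+1), d j * (x:ℤ)^(i-j) * (y:ℤ)^j with hV
  have hdvdV : ∀ i, i ≤ n → (y:ℤ)^(i+1) ∣ V i := by
    intro i hi
    have hxV : (x:ℤ)^(n-i) * V i
        = ∑ j ∈ Finset.range (i+1), d j * (x:ℤ)^(n-j) * (y:ℤ)^j := by
      rw [hV, Finset.mul_sum]
      refine Finset.sum_congr rfl ?_
      intro j hj
      have hj' : j ≤ i := Nat.lt_succ_iff.mp (Finset.mem_range.mp hj)
      have hpow : (x:ℤ)^(n-i) * (x:ℤ)^(i-j) = (x:ℤ)^(n-j) := by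
        rw [← pow_add]; congr 1; omega
      rw [← hpow]; ring
    have hsplit : ∑ j ∈ Finset.range (i+1), d j * (x:ℤ)^(n-j) * (y:ℤ)^j
        = - ∑ j ∈ Finset.Ico (i+1) (n+1), d j * (x:ℤ)^(n-j) * (y:ℤ)^j := by
      have h2 := Finset.sum_range_add_sum_Ico
        (fun j => d j * (x:ℤ)^(n-j) * (y:ℤ)^j) (by omega : i+1 ≤ n+1)
      rw [htot] at h2; linarith
    have hdvd2 : (y:ℤ)^(i+1) ∣ ∑ j ∈ Finset.range (i+1), d j * (x:ℤ)^(n-j) * (y:ℤ)^j := by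
      rw [hsplit]
      refine dvd_neg.mpr (Finset.dvd_sum ?_)
      intro j hj
      have hj' : i+1 ≤ j := (Finset.mem_Ico.mp hj).1
      exact dvd_mul_of_dvd_right (pow_dvd_pow _ hj') _
    rw [← hxV] at hdvd2
    exact (hcxy.symm.pow).dvd_of_dvd_mul_left hdvd2
  set lam := lamSeq x y d with hlam
  have hVs : ∀ i, V (i+1) = (x:ℤ) * V i + d (i+1) * (y:ℤ)^(i+1) := by
    intro i
    simp only [hV]
    have h1 : ∀ j ∈ Finset.range (i+1),
        d j * (x:ℤ)^(i+1-j) * (y:ℤ)^j = (x:ℤ) * (d j * (x:ℤ)^(i-j) * (y:ℤ)^j) := by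
      intro j hj
      have hj' : j ≤ i := Nat.lt_succ_iff.mp (Finset.mem_range.mp hj)
      have hpow : (x:ℤ) * (x:ℤ)^(i-j) = (x:ℤ)^(i+1-j) := by
        rw [← pow_succ']; congr 1; omega
      rw [← hpow]; ring
    rw [Finset.sum_range_succ, Finset.sum_congr rfl h1, ← Finset.mul_sum,
      Nat.sub_self, pow_zero, mul_one]
  have hQ : ∀ i, i ≤ n → (y:ℤ)^(i+1) * lam i = V i := by
    intro i
    induction i with
    | zero =>
      intro _
      have hV0 : V 0 = d 0 := by simp [hV]
      have hdvd : (y:ℤ) ∣ d 0 := by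
        have := hdvdV 0 (by omega); rwa [pow_one, hV0] at this
      have hp : (y:ℤ)^(0+1) = (y:ℤ) := by norm_num
      rw [hp, hV0]
      exact Int.mul_ediv_cancel' hdvd
    | succ i ih =>
      intro hisn
      have hQi := ih (by omega)
      have hdvd : (y:ℤ) ∣ (d (i+1) + (x:ℤ) * lam i) := by
        have h2 := hdvdV (i+1) hisn
        have h3 : V (i+1) = (y:ℤ)^(i+1) * (d (i+1) + (x:ℤ) * lam i) := by
          rw [hVs i, ← hQi]; ring
        rw [h3, pow_succ] at h2
        exact (mul_dvd_mul_iff_left (pow_ne_zero (i+1) hy0')).mp h2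
      have heq : (y:ℤ) * lam (i+1) = d (i+1) + (x:ℤ) * lam i := by
        simp only [hlam, lamSeq]
        exact Int.mul_ediv_cancel' hdvd
      have h6 : (y:ℤ)^(i+2) * lam (i+1) = (y:ℤ)^(i+1) * ((y:ℤ) * lam (i+1)) := by ring
      rw [h6, heq, hVs i, ← hQi]; ring
  have hlamn : lam n = 0 := by
    have h1 := hQ n le_rfl
    have h2 : V n = 0 := by rw [hV]; exact htot
    rw [h2] at h1
    exact (mul_eq_zero.mp h1).resolve_left (pow_ne_zero _ hy0')
  refine ⟨lam, ?_, ?_, hlamn⟩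
  · have h1 := hQ 0 (by omega)
    have hV0 : V 0 = d 0 := by simp [hV]
    rw [hV0] at h1
    rw [← h1]; norm_num
  · intro i h1 h2
    obtain ⟨i', rfl⟩ : ∃ i', i = i' + 1 := ⟨i - 1, by omega⟩
    have hQi := hQ (i'+1) h2
    have hQi' := hQ i' (by omega)
    rw [hVs i', ← hQi'] at hQi
    have h4 : (y:ℤ)^(i'+1) * ((y:ℤ) * lam (i'+1))
        = (y:ℤ)^(i'+1) * (d (i'+1) + (x:ℤ) * lam i') := by
      linear_combination hQi
    have h5 := mul_left_cancel₀ (pow_ne_zero (i'+1) hy0') h4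
    simpa using h5

private lemma key_digit_eq (n x y : ℕ) (hx : 0 < x) (hxy : x < y) (hcop : Nat.Coprime x y)
    (a b : ℕ → ℕ) (k : ℕ) (hk : k ≤ n)
    (haB : ∀ i, i ≤ n → a i < y) (hbB : ∀ i, i ≤ n → b i < y)
    (hak : a k = 0) (ha3 : ∀ i, k < i → i ≤ n → a i ≤ x)
    (m : ℤ) (hm : 0 ≤ m)
    (hv : ∑ i ∈ Finset.range (n+1), (a i : ℤ) * (x:ℤ)^(n-i) * (y:ℤ)^i
        = ∑ i ∈ Finset.range (n+1), (b i : ℤ) * (x:ℤ)^(n-i) * (y:ℤ)^i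
          + m * ∑ i ∈ Finset.range (n+1), (x:ℤ)^(n-i) * (y:ℤ)^i) :
    m = 0 ∧ ∀ i, i ≤ n → a i = b i := by
  have hy0 : (0:ℤ) < (y:ℤ) := by exact_mod_cast hx.trans hxy
  have hx1 : (1:ℤ) ≤ (x:ℤ) := by exact_mod_cast hx
  obtain ⟨d, hdspec⟩ : ∃ d : ℕ → ℤ, ∀ i, d i = (a i : ℤ) - (b i : ℤ) - m :=
    ⟨fun i => (a i : ℤ) - (b i : ℤ) - m, fun i => rfl⟩
  have htot : ∑ i ∈ Finset.range (n+1), d i * (x:ℤ)^(n-i) * (y:ℤ)^i = 0 := by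
    have h1 : ∀ i ∈ Finset.range (n+1),
        d i * ((x:ℤ)^(n-i) * (y:ℤ)^i) = (a i : ℤ) * (x:ℤ)^(n-i) * (y:ℤ)^i
          - ((b i : ℤ) * (x:ℤ)^(n-i) * (y:ℤ)^i + m * ((x:ℤ)^(n-i) * (y:ℤ)^i)) := by
      intro i _; rw [hdspec]; ring
    calc ∑ i ∈ Finset.range (n+1), d i * (x:ℤ)^(n-i) * (y:ℤ)^i
        = ∑ i ∈ Finset.range (n+1), d i * ((x:ℤ)^(n-i) * (y:ℤ)^i) := by
          refine Finset.sum_congr rfl ?_; intro i _; ring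
      _ = ∑ i ∈ Finset.range (n+1), ((a i : ℤ) * (x:ℤ)^(n-i) * (y:ℤ)^i
          - ((b i : ℤ) * (x:ℤ)^(n-i) * (y:ℤ)^i + m * ((x:ℤ)^(n-i) * (y:ℤ)^i))) :=
          Finset.sum_congr rfl h1
      _ = 0 := by
          rw [Finset.sum_sub_distrib, Finset.sum_add_distrib, ← Finset.mul_sum, hv]; ring
  obtain ⟨lam, hrel0, hrel, hlamn⟩ := lam_exists n x y hx hxy hcop d htot
  have hd_ub : ∀ i, i ≤ n → d i ≤ (y:ℤ) - 1 := by
    intro i hi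
    have h1 : (a i : ℤ) ≤ (y:ℤ) - 1 := by
      have := haB i hi; push_cast; omega
    have h2 : (0:ℤ) ≤ (b i : ℤ) := Int.natCast_nonneg _
    rw [hdspec]; linarith
  have hle : ∀ i, i ≤ n → lam i ≤ 0 := by
    intro i
    induction i with
    | zero =>
      intro _
      by_contra h
      push_neg at h
      have h3 : (y:ℤ) * 1 ≤ (y:ℤ) * lam 0 := by
        apply mul_le_mul_of_nonneg_left _ hy0.le; omega
      have := hd_ub 0 (by omega)
      linarith
    | succ i ih =>
      intro hin
      have hli := ih (by omega)
      have h1 := hrel (i+1) (by omega) hin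
      have h2 := hd_ub (i+1) hin
      by_contra h
      push_neg at h
      have h3 : (y:ℤ) * 1 ≤ (y:ℤ) * lam (i+1) := by
        apply mul_le_mul_of_nonneg_left _ hy0.le; omega
      have h4 : (x:ℤ) * lam i ≤ 0 := mul_nonpos_of_nonneg_of_nonpos (by linarith) hli
      simp only [Nat.add_sub_cancel] at h1
      linarith
  have hzero : ∀ i, i ≤ n → lam i = 0 := by
    by_contra hcon
    push_neg at hcon
    obtain ⟨i₀, hi₀n, hi₀⟩ := hcon
    have hex : ∃ i, lam i < 0 := ⟨i₀, (hle i₀ hi₀n).lt_of_ne hi₀⟩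
    obtain ⟨j, hPj, hjmin, hjn⟩ :
        ∃ j, lam j < 0 ∧ (∀ i, i < j → ¬ lam i < 0) ∧ j ≤ n :=
      ⟨Nat.find hex, Nat.find_spec hex, fun i hi => Nat.find_min hex hi,
        le_trans (Nat.find_min' hex ((hle i₀ hi₀n).lt_of_ne hi₀)) hi₀n⟩
    obtain ⟨J, hPJ, hJmax, hJn⟩ :
        ∃ J, lam J < 0 ∧ (∀ i, J < i → i ≤ n → ¬ lam i < 0) ∧ J ≤ n :=
      ⟨Nat.findGreatest (fun i => lam i < 0) n,
        Nat.findGreatest_spec (P := fun i => lam i < 0) hjn hPj,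
        fun i h1 h2 => Nat.findGreatest_is_greatest (P := fun i => lam i < 0) h1 h2,
        Nat.findGreatest_le n⟩
    have hJltn : J < n := by
      rcases eq_or_lt_of_le hJn with h | h
      · rw [h, hlamn] at hPJ; omega
      · exact h
    have hlamJ1 : lam (J+1) = 0 := by
      have h1 := hJmax (J+1) (by omega) (by omega)
      have h2 := hle (J+1) (by omega)
      omega
    have hdJ1 : (x:ℤ) ≤ d (J+1) := by
      have h1 := hrel (J+1) (by omega) (by omega)
      simp only [Nat.add_sub_cancel] at h1
      rw [hlamJ1, mul_zero] at h1
      have h2 : lam J ≤ -1 := by omega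
      nlinarith
    have hm1 : 1 ≤ m := by
      have hdj : d j ≤ -(y:ℤ) := by
        rcases Nat.eq_zero_or_pos j with h | h
        · rw [h] at hPj ⊢
          have h2 : lam 0 ≤ -1 := by omega
          nlinarith [hrel0]
        · have h1 := hrel j (by omega) hjn
          have h2 : lam (j-1) = 0 := by
            have := hjmin (j-1) (by omega)
            have := hle (j-1) (by omega)
            omega
          rw [h2, mul_zero, add_zero] at h1
          have h3 : lam j ≤ -1 := by omega
          nlinarith
      have hbj : (b j : ℤ) ≤ (y:ℤ) - 1 := by
        have := hbB j hjn; push_cast; omega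
      have haj : (0:ℤ) ≤ (a j : ℤ) := Int.natCast_nonneg _
      rw [hdspec] at hdj
      linarith
    have hJ1k : J + 1 < k := by
      have h1 : (x:ℤ) + 1 ≤ (a (J+1) : ℤ) := by
        have h2 : (0:ℤ) ≤ (b (J+1) : ℤ) := Int.natCast_nonneg _
        have h5 := hdspec (J+1)
        linarith [hdJ1]
      by_contra h
      push_neg at h
      rcases eq_or_lt_of_le h with h' | h'
      · rw [h'] at hak; rw [hak] at h1; push_cast at h1; linarith
      · have h6 := ha3 (J+1) h' (by omega)
        have h7 : (a (J+1) : ℤ) ≤ (x:ℤ) := by exact_mod_cast h6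
        linarith
    have hk1 : 1 ≤ k := by omega
    have h1 := hrel k hk1 hk
    have h2 : lam k = 0 := by
      have := hJmax k (by omega) hk
      have := hle k hk
      omega
    have h3 : lam (k-1) = 0 := by
      have := hJmax (k-1) (by omega) (by omega)
      have := hle (k-1) (by omega)
      omega
    rw [h2, h3, mul_zero, mul_zero] at h1
    have h4 : d k = 0 := by linarith
    have h5 := hdspec k
    rw [hak] at h5
    have h6 : (0:ℤ) ≤ (b k : ℤ) := Int.natCast_nonneg _
    push_cast at h5
    omega
  have hd0 : ∀ i, i ≤ n → d i = 0 := by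
    intro i hi
    rcases Nat.eq_zero_or_pos i with h | h
    · rw [h, ← hrel0, hzero 0 (by omega), mul_zero]
    · have h1 := hrel i h hi
      rw [hzero i hi, hzero (i-1) (by omega), mul_zero, mul_zero] at h1
      linarith
  have hm0 : m = 0 := by
    have h1 := hd0 k hk
    have h5 := hdspec k
    rw [hak] at h5
    have h6 : (0:ℤ) ≤ (b k : ℤ) := Int.natCast_nonneg _
    push_cast at h5
    omega
  refine ⟨hm0, ?_⟩
  intro i hi
  have h1 := hd0 i hi
  have h5 := hdspec i
  rw [hm0] at h5
  have : (a i : ℤ) = (b i : ℤ) := by omega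
  exact_mod_cast this

/-- digit extraction -/
private def dig (n : ℕ) (c : Fin (n+2) → ℕ) (i : ℕ) : ℕ :=
  if h : i < n + 2 then c ⟨i, h⟩ else 0

private lemma tupleVal_eq_sum (n x y : ℕ) (c : Fin (n+2) → ℕ) :
    tupleVal n x y c = ∑ i ∈ Finset.range (n+1), dig n c i * x ^ (n-i) * y ^ i := by
  rw [tupleVal, ← Fin.sum_univ_eq_sum_range (fun i => dig n c i * x ^ (n-i) * y ^ i) (n+1)]
  refine Finset.sum_congr rfl ?_
  intro k _
  have h1 : dig n c (k : ℕ) = c k.castSucc := by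
    have hlt : (k : ℕ) < n + 2 := by omega
    simp only [dig, hlt, dif_pos]
    congr 1
  rw [h1]

/-- the `B` finsets of per-coordinate constraints -/
private def Bset (n x y k : ℕ) (j : ℕ) : Finset ℕ :=
  if j < k then Finset.range y else if j = k then {0}
  else if j ≤ n then Finset.Icc 1 x else {0}

private def LdFinset (n x y : ℕ) : Finset (Fin (n+2) → ℕ) :=
  (Finset.range (n+1)).biUnion
    (fun k => Fintype.piFinset (fun i : Fin (n+2) => Bset n x y k (i : ℕ)))

private lemma mem_LdFinset_iff (n x y : ℕ) (c : Fin (n+2) → ℕ) :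
    c ∈ LdFinset n x y ↔ c ∈ Ld n x y := by
  rw [LdFinset, Finset.mem_biUnion]
  constructor
  · rintro ⟨k, hk, hc⟩
    rw [Finset.mem_range] at hk
    rw [Fintype.mem_piFinset] at hc
    have hk' : k ≤ n := by omega
    refine ⟨?_, ⟨⟨k, by omega⟩, ?_, ?_, ?_⟩⟩
    · have := hc (Fin.last (n+1))
      have hval : ((Fin.last (n+1) : Fin (n+2)) : ℕ) = n + 1 := rfl
      rw [hval] at this
      simp only [Bset, if_neg (by omega : ¬ n+1 < k), if_neg (by omega : ¬ n+1 = k),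
        if_neg (by omega : ¬ n+1 ≤ n), Finset.mem_singleton] at this
      exact this
    · intro i hi
      have := hc i
      simp only [Bset, if_pos hi, Finset.mem_range] at this
      exact this
    · have hB : Bset n x y k k = {0} := by simp [Bset]
      have h9 := hc ⟨k, by omega⟩
      have hval : ((⟨k, by omega⟩ : Fin (n+2)) : ℕ) = k := rfl
      rw [hval, hB, Finset.mem_singleton] at h9
      have hcast : ((⟨k, by omega⟩ : Fin (n+1)).castSucc) = (⟨k, by omega⟩ : Fin (n+2)) := by
        ext; simp
      rw [hcast]
      exact h9
    · intro i h1 h2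
      have h1' : k < (i : ℕ) := by simpa using h1
      have h9 := hc i
      simp only [Bset, if_neg (by omega : ¬ (i:ℕ) < k), if_neg (by omega : ¬ (i:ℕ) = k),
        if_pos h2, Finset.mem_Icc] at h9
      exact h9
  · rintro ⟨hlast, ⟨k, h1, h2, h3⟩⟩
    refine ⟨(k : ℕ), Finset.mem_range.mpr (by omega), ?_⟩
    rw [Fintype.mem_piFinset]
    intro i
    rcases lt_trichotomy ((i : ℕ)) ((k : ℕ)) with h | h | h
    · simp only [Bset, if_pos h, Finset.mem_range]
      exact h1 i h
    · simp only [Bset, if_neg (by omega : ¬ (i:ℕ) < (k:ℕ)), if_pos h, Finset.mem_singleton]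
      have : i = k.castSucc := by
        ext; simpa using h
      rw [this]; exact h2
    · simp only [Bset, if_neg (by omega : ¬ (i:ℕ) < (k:ℕ)), if_neg (by omega : ¬ (i:ℕ) = (k:ℕ))]
      rcases le_or_gt ((i : ℕ)) n with h4 | h4
      · simp only [if_pos h4, Finset.mem_Icc]
        exact h3 i h h4
      · have h5 : (i : ℕ) = n + 1 := by omega
        simp only [if_neg (by omega : ¬ (i:ℕ) ≤ n), Finset.mem_singleton]
        have : i = Fin.last (n+1) := by ext; simpa using h5
        rw [this]; exact hlast

private lemma card_LdFinset (n x y : ℕ) (hx : 0 < x) (hxy : x < y) :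
    (LdFinset n x y).card = Fval n x y := by
  rw [LdFinset, Finset.card_biUnion]
  · have h1 : ∀ k ∈ Finset.range (n+1),
        (Fintype.piFinset (fun i : Fin (n+2) => Bset n x y k (i : ℕ))).card
          = x ^ (n-k) * y ^ k := by
      intro k hk
      rw [Finset.mem_range] at hk
      have hk' : k ≤ n := by omega
      rw [Fintype.card_piFinset]
      have h2 : ∀ i : Fin (n+2), (Bset n x y k (i : ℕ)).card
          = (fun j => if j < k then y else if j = k then 1 else if j ≤ n then x else 1) (i : ℕ) := by
        intro i
        simp only [Bset]
        rcases lt_trichotomy ((i:ℕ)) k with h | h | h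
        · simp [h]
        · simp [h]
        · simp only [if_neg (by omega : ¬ (i:ℕ) < k), if_neg (by omega : ¬ (i:ℕ) = k)]
          rcases le_or_gt ((i:ℕ)) n with h4 | h4
          · simp [h4, Nat.card_Icc]
          · simp [Nat.not_le.mpr h4, if_neg (by omega : ¬ (i:ℕ) ≤ n)]
      rw [Finset.prod_congr rfl (fun i _ => h2 i),
        Fin.prod_univ_eq_prod_range (fun j => if j < k then y else if j = k then 1 else if j ≤ n then x else 1) (n+2)]
      rw [Finset.range_eq_Ico,
        ← Finset.prod_Ico_consecutive _ (by omega : 0 ≤ k) (by omega : k ≤ n+2),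
        ← Finset.prod_Ico_consecutive _ (by omega : k ≤ k+1) (by omega : k+1 ≤ n+2),
        ← Finset.prod_Ico_consecutive _ (by omega : k+1 ≤ n+1) (by omega : n+1 ≤ n+2)]
      have e1 : ∏ j ∈ Finset.Ico 0 k,
          (if j < k then y else if j = k then 1 else if j ≤ n then x else 1) = y ^ k := by
        rw [Finset.prod_congr rfl (fun j hj => if_pos (Finset.mem_Ico.mp hj).2),
          Finset.prod_const, Nat.card_Ico, Nat.sub_zero]
      have e2 : ∏ j ∈ Finset.Ico k (k+1),
          (if j < k then y else if j = k then 1 else if j ≤ n then x else 1) = 1 := by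
        rw [Nat.Ico_succ_singleton, Finset.prod_singleton]
        simp
      have e3 : ∏ j ∈ Finset.Ico (k+1) (n+1),
          (if j < k then y else if j = k then 1 else if j ≤ n then x else 1) = x ^ (n-k) := by
        have : ∀ j ∈ Finset.Ico (k+1) (n+1),
            (if j < k then y else if j = k then 1 else if j ≤ n then x else 1) = x := by
          intro j hj
          rw [Finset.mem_Ico] at hj
          rw [if_neg (by omega), if_neg (by omega), if_pos (by omega)]
        rw [Finset.prod_congr rfl this, Finset.prod_const, Nat.card_Ico]
        congr 1; omega
      have e4 : ∏ j ∈ Finset.Ico (n+1) (n+2),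
          (if j < k then y else if j = k then 1 else if j ≤ n then x else 1) = 1 := by
        rw [Nat.Ico_succ_singleton, Finset.prod_singleton]
        rw [if_neg (by omega), if_neg (by omega), if_neg (by omega)]
      rw [e1, e2, e3, e4]
      ring
    rw [Finset.sum_congr rfl h1, Fval]
  · intro k hk k' hk' hne
    rw [Finset.mem_coe, Finset.mem_range] at hk hk'
    have key : ∀ k k' : ℕ, k < k' → k' ≤ n →
        Disjoint (Fintype.piFinset (fun i : Fin (n+2) => Bset n x y k (i : ℕ)))
          (Fintype.piFinset (fun i : Fin (n+2) => Bset n x y k' (i : ℕ))) := by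
      intro k k' hlt hle
      rw [Finset.disjoint_left]
      intro c hc1 hc2
      rw [Fintype.mem_piFinset] at hc1 hc2
      have h1 := hc1 ⟨k', by omega⟩
      have h2 := hc2 ⟨k', by omega⟩
      have hval : ((⟨k', by omega⟩ : Fin (n+2)) : ℕ) = k' := rfl
      rw [hval] at h1 h2
      simp only [Bset, if_neg (by omega : ¬ k' < k), if_neg (by omega : ¬ k' = k),
        if_pos hle, Finset.mem_Icc] at h1
      have hB : Bset n x y k' k' = {0} := by simp [Bset]
      rw [hB, Finset.mem_singleton] at h2
      omega
    rcases lt_or_gt_of_ne hne with h | h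
    · exact key k k' h (by omega)
    · exact (key k' k h (by omega)).symm

private lemma Ld_spec (n x y : ℕ) (c : Fin (n+2) → ℕ) (hc : c ∈ Ld n x y) :
    ∃ k, k ≤ n ∧ (∀ i, i < k → dig n c i < y) ∧ dig n c k = 0 ∧
      (∀ i, k < i → i ≤ n → 1 ≤ dig n c i ∧ dig n c i ≤ x) := by
  obtain ⟨hlast, k, h1, h2, h3⟩ := hc
  have hkn : (k : ℕ) ≤ n := by omega
  refine ⟨(k : ℕ), hkn, ?_, ?_, ?_⟩
  · intro i hi
    have hi2 : i < n + 2 := by omega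
    have := h1 ⟨i, hi2⟩ (by simpa using hi)
    simpa [dig, hi2] using this
  · have hlt : (k : ℕ) < n + 2 := by omega
    have hcast : k.castSucc = (⟨(k : ℕ), hlt⟩ : Fin (n+2)) := by ext; simp
    rw [hcast] at h2
    simpa [dig, hlt] using h2
  · intro i hi1 hi2
    have hi3 : i < n + 2 := by omega
    have := h3 ⟨i, hi3⟩ (by simpa using hi1) (by simpa using hi2)
    simpa [dig, hi3] using this

private lemma Ld_dig_lt (n x y : ℕ) (hx : 0 < x) (hxy : x < y)
    (c : Fin (n+2) → ℕ) (hc : c ∈ Ld n x y) : ∀ i, i ≤ n → dig n c i < y := by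
  obtain ⟨k, hk, h1, h2, h3⟩ := Ld_spec n x y c hc
  intro i hi
  rcases lt_trichotomy i k with h | h | h
  · exact h1 i h
  · rw [h, h2]; omega
  · have := (h3 i h hi).2; omega

private lemma val_ub (n x y : ℕ) (hx : 0 < x) (hxy : x < y) (a : ℕ → ℕ) (k : ℕ) (hk : k ≤ n)
    (h1 : ∀ i, i < k → a i < y) (h2 : a k = 0) (h3 : ∀ i, k < i → i ≤ n → a i ≤ x) :
    ∑ i ∈ Finset.range (n+1), a i * x ^ (n-i) * y ^ i + x ^ (n+1) ≤ x * Fval n x y := by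
  have hsplit : ∑ i ∈ Finset.range (n+1), a i * x ^ (n-i) * y ^ i
      = ∑ i ∈ Finset.range (k+1), a i * x ^ (n-i) * y ^ i
        + ∑ i ∈ Finset.Ico (k+1) (n+1), a i * x ^ (n-i) * y ^ i :=
    (Finset.sum_range_add_sum_Ico _ (by omega)).symm
  have hA : ∑ i ∈ Finset.range (k+1), a i * x ^ (n-i) * y ^ i
      ≤ x * ∑ j ∈ Finset.Ico 1 (k+1), x ^ (n-j) * y ^ j := by
    rw [Finset.sum_range_succ, h2, zero_mul, zero_mul, add_zero]
    have hterm : ∀ i ∈ Finset.range k,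
        a i * x ^ (n-i) * y ^ i ≤ x * (x ^ (n-(i+1)) * y ^ (i+1)) := by
      intro i hi
      have hik : i < k := Finset.mem_range.mp hi
      have hin : i < n := by omega
      have e : y * x ^ (n-i) * y ^ i = x * (x ^ (n-(i+1)) * y ^ (i+1)) := by
        have h5 : n - i = (n - (i+1)) + 1 := by omega
        rw [h5, pow_succ, pow_succ]
        ring
      calc a i * x ^ (n-i) * y ^ i ≤ y * x ^ (n-i) * y ^ i := by
            have := h1 i hik
            exact Nat.mul_le_mul_right _ (Nat.mul_le_mul_right _ (by omega))
        _ = x * (x ^ (n-(i+1)) * y ^ (i+1)) := e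
    calc ∑ i ∈ Finset.range k, a i * x ^ (n-i) * y ^ i
        ≤ ∑ i ∈ Finset.range k, x * (x ^ (n-(i+1)) * y ^ (i+1)) := Finset.sum_le_sum hterm
      _ = x * ∑ i ∈ Finset.range k, x ^ (n-(i+1)) * y ^ (i+1) := by rw [Finset.mul_sum]
      _ = x * ∑ j ∈ Finset.Ico 1 (k+1), x ^ (n-j) * y ^ j := by
          congr 1
          rw [Finset.sum_Ico_eq_sum_range]
          refine Finset.sum_congr (by congr 1) ?_
          intro i _
          congr 2 <;> omega
  have hB : ∑ i ∈ Finset.Ico (k+1) (n+1), a i * x ^ (n-i) * y ^ i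
      ≤ x * ∑ j ∈ Finset.Ico (k+1) (n+1), x ^ (n-j) * y ^ j := by
    rw [Finset.mul_sum]
    refine Finset.sum_le_sum ?_
    intro i hi
    rw [Finset.mem_Ico] at hi
    have := h3 i (by omega) (by omega)
    calc a i * x ^ (n-i) * y ^ i = a i * (x ^ (n-i) * y ^ i) := by ring
      _ ≤ x * (x ^ (n-i) * y ^ i) := Nat.mul_le_mul_right _ this
  have hC : x * ∑ j ∈ Finset.Ico 1 (k+1), x ^ (n-j) * y ^ j
      + x * ∑ j ∈ Finset.Ico (k+1) (n+1), x ^ (n-j) * y ^ j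
      = x * ∑ j ∈ Finset.Ico 1 (n+1), x ^ (n-j) * y ^ j := by
    rw [← mul_add, Finset.sum_Ico_consecutive _ (by omega : 1 ≤ k+1) (by omega : k+1 ≤ n+1)]
  have hD : x * Fval n x y
      = x ^ (n+1) + x * ∑ j ∈ Finset.Ico 1 (n+1), x ^ (n-j) * y ^ j := by
    have hFs : Fval n x y = x ^ n + ∑ j ∈ Finset.Ico 1 (n+1), x ^ (n-j) * y ^ j := by
      rw [Fval, ← Finset.sum_range_add_sum_Ico _ (by omega : 1 ≤ n+1), Finset.sum_range_one]
      simp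
    rw [hFs, Nat.mul_add, pow_succ]
    ring
  calc ∑ i ∈ Finset.range (n+1), a i * x ^ (n-i) * y ^ i + x ^ (n+1)
      ≤ (x * ∑ j ∈ Finset.Ico 1 (k+1), x ^ (n-j) * y ^ j
          + x * ∑ j ∈ Finset.Ico (k+1) (n+1), x ^ (n-j) * y ^ j) + x ^ (n+1) := by
        rw [hsplit]; omega
    _ = x * Fval n x y := by rw [hC, hD]; omega

private lemma val_congr (n x y : ℕ) (hx : 0 < x) (hxy : x < y) (hcop : Nat.Coprime x y)
    (c c' : Fin (n+2) → ℕ) (hc : c ∈ Ld n x y) (hc' : c' ∈ Ld n x y) (m : ℤ)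
    (hv : (tupleVal n x y c : ℤ) = (tupleVal n x y c' : ℤ) + m * (Fval n x y : ℤ)) :
    m = 0 ∧ c = c' := by
  obtain ⟨k, hk, ha1, ha2, ha3⟩ := Ld_spec n x y c hc
  obtain ⟨k', hk', hb1, hb2, hb3⟩ := Ld_spec n x y c' hc'
  have haB := Ld_dig_lt n x y hx hxy c hc
  have hbB := Ld_dig_lt n x y hx hxy c' hc'
  have hva : (tupleVal n x y c : ℤ)
      = ∑ i ∈ Finset.range (n+1), (dig n c i : ℤ) * (x:ℤ) ^ (n-i) * (y:ℤ) ^ i := by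
    rw [tupleVal_eq_sum]; push_cast; ring
  have hvb : (tupleVal n x y c' : ℤ)
      = ∑ i ∈ Finset.range (n+1), (dig n c' i : ℤ) * (x:ℤ) ^ (n-i) * (y:ℤ) ^ i := by
    rw [tupleVal_eq_sum]; push_cast; ring
  have hvF : (Fval n x y : ℤ)
      = ∑ i ∈ Finset.range (n+1), (x:ℤ) ^ (n-i) * (y:ℤ) ^ i := by
    rw [Fval]; push_cast; ring
  rw [hva, hvb, hvF] at hv
  have hmain : m = 0 ∧ ∀ i, i ≤ n → dig n c i = dig n c' i := by
    rcases le_or_gt 0 m with hm | hm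
    · exact key_digit_eq n x y hx hxy hcop (dig n c) (dig n c') k hk haB hbB ha2
        (fun i hi1 hi2 => (ha3 i hi1 hi2).2) m hm hv
    · have hv' : ∑ i ∈ Finset.range (n+1), (dig n c' i : ℤ) * (x:ℤ) ^ (n-i) * (y:ℤ) ^ i
          = ∑ i ∈ Finset.range (n+1), (dig n c i : ℤ) * (x:ℤ) ^ (n-i) * (y:ℤ) ^ i
            + (-m) * ∑ i ∈ Finset.range (n+1), (x:ℤ) ^ (n-i) * (y:ℤ) ^ i := by
        linear_combination -hv
      have := key_digit_eq n x y hx hxy hcop (dig n c') (dig n c) k' hk' hbB haB hb2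
        (fun i hi1 hi2 => (hb3 i hi1 hi2).2) (-m) (by omega) hv'
      exact ⟨by omega, fun i hi => (this.2 i hi).symm⟩
  refine ⟨hmain.1, ?_⟩
  funext i
  rcases Nat.lt_or_ge ((i : ℕ)) (n+1) with h | h
  · have := hmain.2 (i : ℕ) (by omega)
    simpa [dig, i.isLt] using this
  · have hi : i = Fin.last (n+1) := by
      ext; simp only [Fin.val_last]; omega
    rw [hi, hc.1, hc'.1]



/-- For every integer `t` there is a unique integer `m` such that
`t + m·F ∈ G`, and this `m` satisfies `⌈−t/F⌉ ≤ m ≤ ⌈−t/F⌉ + x − 1`. -/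

theorem exists_unique_int_shift_mem_G
    (n x y : ℕ) (hn : 1 ≤ n) (hx : 0 < x) (hxy : x < y) (hcop : Nat.Coprime x y)
    (t : ℤ) :
    (∃! m : ℤ, t + m * (Fval n x y : ℤ) ∈ Gset n x y) ∧
    (∀ m : ℤ, t + m * (Fval n x y : ℤ) ∈ Gset n x y →
      ⌈(-t : ℚ) / (Fval n x y : ℚ)⌉ ≤ m ∧
        m ≤ ⌈(-t : ℚ) / (Fval n x y : ℚ)⌉ + (x : ℤ) - 1) := by
  have hy : 0 < y := hx.trans hxy
  have hF : 0 < Fval n x y := by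
    rw [Fval]
    refine Finset.sum_pos ?_ ⟨0, Finset.mem_range.mpr (by omega)⟩
    intro i _
    positivity
  haveI : NeZero (Fval n x y) := ⟨hF.ne'⟩
  have hFZ : (0:ℤ) < (Fval n x y : ℤ) := by exact_mod_cast hF
  -- injectivity of the value map into ZMod F
  have hinj : Set.InjOn (fun c => ((tupleVal n x y c : ℕ) : ZMod (Fval n x y)))
      ↑(LdFinset n x y) := by
    intro c hc c' hc' hfc
    simp only at hfc
    have hc1 : c ∈ Ld n x y := (mem_LdFinset_iff n x y c).mp (by simpa using hc)
    have hc1' : c' ∈ Ld n x y := (mem_LdFinset_iff n x y c').mp (by simpa using hc')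
    have hmod : (Nat.ModEq (Fval n x y) (tupleVal n x y c) (tupleVal n x y c')) :=
      (ZMod.natCast_eq_natCast_iff _ _ _).mp hfc
    have hdvd : (Fval n x y : ℤ) ∣ (tupleVal n x y c : ℤ) - (tupleVal n x y c' : ℤ) := by
      have h9 := hmod.dvd
      have h10 : (tupleVal n x y c : ℤ) - (tupleVal n x y c' : ℤ)
          = -((tupleVal n x y c' : ℤ) - (tupleVal n x y c : ℤ)) := by ring
      rw [h10]
      exact Int.dvd_neg.mpr h9
    obtain ⟨mm, hmm⟩ := hdvd
    have := val_congr n x y hx hxy hcop c c' hc1 hc1' mm (by linear_combination hmm)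
    exact this.2
  have himage : (LdFinset n x y).image (fun c => ((tupleVal n x y c : ℕ) : ZMod (Fval n x y)))
      = Finset.univ := by
    apply Finset.eq_univ_of_card
    rw [Finset.card_image_of_injOn hinj, card_LdFinset n x y hx hxy, ZMod.card]
  -- existence
  have hexist : ∃ m : ℤ, t + m * (Fval n x y : ℤ) ∈ Gset n x y := by
    have hmem : ((t : ZMod (Fval n x y))) ∈ (LdFinset n x y).image
        (fun c => ((tupleVal n x y c : ℕ) : ZMod (Fval n x y))) := by
      rw [himage]; exact Finset.mem_univ _
    obtain ⟨c, hcF, hfc⟩ := Finset.mem_image.mp hmem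
    have hcLd : c ∈ Ld n x y := (mem_LdFinset_iff n x y c).mp hcF
    have h0 : (((tupleVal n x y c : ℤ) - t : ℤ) : ZMod (Fval n x y)) = 0 := by
      push_cast
      rw [hfc]
      ring
    rw [ZMod.intCast_zmod_eq_zero_iff_dvd] at h0
    obtain ⟨m, hm⟩ := h0
    exact ⟨m, c, hcLd, by linear_combination hm⟩
  obtain ⟨m₀, hm₀⟩ := hexist
  constructor
  · refine ⟨m₀, hm₀, ?_⟩
    intro m' hm'
    obtain ⟨c', hc'Ld, he'⟩ := hm'
    obtain ⟨c₀, hc₀Ld, he₀⟩ := hm₀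
    have := val_congr n x y hx hxy hcop c' c₀ hc'Ld hc₀Ld (m' - m₀)
      (by linear_combination he' - he₀)
    omega
  · intro m hm
    obtain ⟨c, hcLd, he⟩ := hm
    have h0 : (0:ℤ) ≤ t + m * (Fval n x y : ℤ) := by
      rw [← he]; exact Int.natCast_nonneg _
    have hub : t + m * (Fval n x y : ℤ) + (x:ℤ) ^ (n+1) ≤ (x:ℤ) * (Fval n x y : ℤ) := by
      obtain ⟨k, hk, h1, h2, h3⟩ := Ld_spec n x y c hcLd
      have hN := val_ub n x y hx hxy (dig n c) k hk h1 h2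
        (fun i hi1 hi2 => (h3 i hi1 hi2).2)
      rw [← tupleVal_eq_sum] at hN
      have hZ : (tupleVal n x y c : ℤ) + (x:ℤ) ^ (n+1) ≤ (x:ℤ) * (Fval n x y : ℤ) := by
        exact_mod_cast hN
      rw [he] at hZ
      exact hZ
    have hxp : (0:ℤ) < (x:ℤ) ^ (n+1) := by positivity
    have hlt : t + m * (Fval n x y : ℤ) < (x:ℤ) * (Fval n x y : ℤ) := by linarith
    have hFQ : (0:ℚ) < (Fval n x y : ℚ) := by exact_mod_cast hF
    constructor
    · rw [Int.ceil_le, div_le_iff₀ hFQ]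
      have hZi : -t ≤ m * (Fval n x y : ℤ) := by linarith
      exact_mod_cast hZi
    · have h2 : m - (x:ℤ) < ⌈(-t : ℚ) / (Fval n x y : ℚ)⌉ := by
        rw [Int.lt_ceil, lt_div_iff₀ hFQ]
        have h3 : (m - (x:ℤ)) * (Fval n x y : ℤ) < -t := by nlinarith
        exact_mod_cast h3
      omega
end

section
/- Let v_k ∈ ℤ^n (for k ∈ {1,…,n}) be the vectors v_k := y·e_{k−1} − (x+y)·e_k + x·e_{k+1}, where e_1,…,e_n is the standard basis of ℤ^n and e_0 := 0, e_{n+1} := 0. Then the quotient group ℤ^n / ⟨v_1,…,v_n⟩ is cyclic of order F = Σ_{k=0}^n x^(n−k)·y^k. (This quotient is the sandpile group of the path multigraph P^{x,y}_n.) -/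
/-- The vector `v_k = y·e_{k−1} − (x+y)·e_k + x·e_{k+1}` in `ℤ^n`, where
`e_1,…,e_n` is the standard basis (`e_0 = e_{n+1} = 0`); here coordinates and
indices are 0-based, so `k : Fin n` stands for the vertex `u_{k+1}`. -/
def vvec (n x y : ℕ) (k : Fin n) : Fin n → ℤ := fun i =>
  (if (i : ℕ) + 1 = (k : ℕ) then (y : ℤ) else 0)
    - (if i = k then ((x : ℤ) + (y : ℤ)) else 0)
    + (if (i : ℕ) = (k : ℕ) + 1 then (x : ℤ) else 0)

def Dvec (n : ℕ) (k : ℕ) : Fin n → ℤ :=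
  (if h : k < n then Pi.single (⟨k, h⟩ : Fin n) (1:ℤ) else 0)
    - (if h : 0 < k ∧ k ≤ n then Pi.single (⟨k-1, by omega⟩ : Fin n) (1:ℤ) else 0)

theorem Dvec_rel (n x y : ℕ) (k : ℕ) (hk : k < n) :
    (x:ℤ) • Dvec n (k+1) - (y:ℤ) • Dvec n k = vvec n x y ⟨k, hk⟩ := by
  funext i
  simp only [Dvec, vvec, Pi.sub_apply, Pi.smul_apply, smul_eq_mul, dite_apply,
    Pi.zero_apply, Pi.single_apply, Fin.ext_iff, mul_dite, mul_ite, mul_one, mul_zero]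
  rcases i with ⟨i, hi⟩
  simp only [Fin.mk.injEq]
  split_ifs <;> omega

def Lsub (n x y : ℕ) : AddSubgroup (Fin n → ℤ) := AddSubgroup.closure (Set.range (vvec n x y))

theorem vvec_mem (n x y : ℕ) (k : Fin n) : vvec n x y k ∈ Lsub n x y :=
  AddSubgroup.subset_closure (Set.mem_range_self k)

theorem lemA_s15 (n x y : ℕ) : ∀ k, k ≤ n →
    ((x:ℤ)^k) • Dvec n k - ((y:ℤ)^k) • Dvec n 0 ∈ Lsub n x y := by
  intro k
  induction k with
  | zero => intro _; simp only [pow_zero, one_smul, Nat.sub_zero, sub_self]; exact zero_mem _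
  | succ k ih =>
    intro hk1
    have hk : k < n := by omega
    have key : ((x:ℤ)^(k+1)) • Dvec n (k+1) - ((y:ℤ)^(k+1)) • Dvec n 0
        = (x:ℤ)^k • ((x:ℤ) • Dvec n (k+1) - (y:ℤ) • Dvec n k)
          + (y:ℤ) • (((x:ℤ)^k) • Dvec n k - ((y:ℤ)^k) • Dvec n 0) := by
      module
    rw [key, Dvec_rel n x y k hk]
    exact add_mem (AddSubgroup.zsmul_mem _ (vvec_mem n x y _) _)
      (AddSubgroup.zsmul_mem _ (ih (by omega)) _)

theorem lemB (n x y : ℕ) : ∀ j, j ≤ n →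
    ((y:ℤ)^j) • Dvec n (n-j) - ((x:ℤ)^j) • Dvec n n ∈ Lsub n x y := by
  intro j
  induction j with
  | zero => intro _; simp only [pow_zero, one_smul, Nat.sub_zero, sub_self]; exact zero_mem _
  | succ j ih =>
    intro hj1
    have hk : n - (j+1) < n := by omega
    have hnj : n - (j+1) + 1 = n - j := by omega
    have key : ((y:ℤ)^(j+1)) • Dvec n (n-(j+1)) - ((x:ℤ)^(j+1)) • Dvec n n
        = (x:ℤ) • (((y:ℤ)^j) • Dvec n (n-j) - ((x:ℤ)^j) • Dvec n n)
          - (y:ℤ)^j • ((x:ℤ) • Dvec n (n-(j+1)+1) - (y:ℤ) • Dvec n (n-(j+1))) := by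
      rw [hnj]; module
    rw [key, Dvec_rel n x y _ hk]
    exact sub_mem (AddSubgroup.zsmul_mem _ (ih (by omega)) _)
      (AddSubgroup.zsmul_mem _ (vvec_mem n x y _) _)

theorem Dsum (n : ℕ) (hn : 1 ≤ n) : ∀ m, m ≤ n →
    ∑ k ∈ Finset.range (m+1), Dvec n k
      = (if h : m < n then Pi.single (⟨m, h⟩ : Fin n) (1:ℤ) else 0) := by
  intro m
  induction m with
  | zero =>
    intro _
    simp only [zero_add, Finset.sum_range_one, Dvec]
    rw [dif_pos (show 0 < n by omega), dif_neg (by omega)]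
    simp
  | succ m ih =>
    intro hm1
    rw [Finset.sum_range_succ, ih (by omega)]
    simp only [Dvec]
    rw [dif_pos (by omega : m < n), dif_pos (show 0 < m+1 ∧ m+1 ≤ n by omega)]
    have : (⟨m+1-1, by omega⟩ : Fin n) = ⟨m, by omega⟩ := rfl
    rw [this]
    abel

theorem Dvec_zero (n : ℕ) (hn : 1 ≤ n) : Dvec n 0 = Pi.single (⟨0, hn⟩ : Fin n) (1:ℤ) := by
  simp only [Dvec]
  rw [dif_pos (show 0 < n by omega), dif_neg (by omega)]
  simp

theorem Dvec_n (n : ℕ) (hn : 1 ≤ n) :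
    Dvec n n = -Pi.single (⟨n-1, by omega⟩ : Fin n) (1:ℤ) := by
  simp only [Dvec]
  rw [dif_neg (by omega), dif_pos (by omega : 0 < n ∧ n ≤ n)]
  simp

theorem Fval_reflect (n x y : ℕ) :
    (Fval n x y) = ∑ j ∈ Finset.range (n+1), x^j * y^(n-j) := by
  rw [Fval, ← Finset.sum_range_reflect]
  refine Finset.sum_congr rfl fun j hj => ?_
  have hj' : j ≤ n := by simpa [Nat.lt_succ_iff] using hj
  have h1 : n + 1 - 1 - j = n - j := by omega
  have h2 : n - (n - j) = j := by omega
  rw [h1, h2]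

theorem memFE0 (n x y : ℕ) (hn : 1 ≤ n) :
    ((Fval n x y : ℤ)) • Pi.single (⟨0, hn⟩ : Fin n) (1:ℤ) ∈ Lsub n x y := by
  have hS : ∑ k ∈ Finset.range (n+1),
      (x:ℤ)^(n-k) • (((x:ℤ)^k) • Dvec n k - ((y:ℤ)^k) • Dvec n 0) ∈ Lsub n x y :=
    sum_mem fun k hk =>
      AddSubgroup.zsmul_mem _ (lemA_s15 n x y k (by simpa [Nat.lt_succ_iff] using hk)) _
  have hrw : ∑ k ∈ Finset.range (n+1),
      (x:ℤ)^(n-k) • (((x:ℤ)^k) • Dvec n k - ((y:ℤ)^k) • Dvec n 0)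
      = -(((Fval n x y : ℤ)) • Dvec n 0) := by
    have : ∀ k ∈ Finset.range (n+1),
        (x:ℤ)^(n-k) • (((x:ℤ)^k) • Dvec n k - ((y:ℤ)^k) • Dvec n 0)
        = (x:ℤ)^n • Dvec n k - ((x:ℤ)^(n-k) * (y:ℤ)^k) • Dvec n 0 := by
      intro k hk
      have hk' : k ≤ n := by simpa [Nat.lt_succ_iff] using hk
      have h2 : n - k + k = n := by omega
      rw [smul_sub, smul_smul, smul_smul, ← pow_add, h2]
    rw [Finset.sum_congr rfl this, Finset.sum_sub_distrib, ← Finset.smul_sum,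
      ← Finset.sum_smul, Dsum n hn n le_rfl, dif_neg (lt_irrefl n), smul_zero, zero_sub]
    congr 1
    rw [Fval]
    push_cast
    rfl
  rw [hrw, Dvec_zero n hn] at hS
  simpa using (neg_mem hS : _)

theorem memFEn (n x y : ℕ) (hn : 1 ≤ n) :
    ((Fval n x y : ℤ)) • Pi.single (⟨n-1, by omega⟩ : Fin n) (1:ℤ) ∈ Lsub n x y := by
  have hS : ∑ j ∈ Finset.range (n+1),
      (y:ℤ)^(n-j) • (((y:ℤ)^j) • Dvec n (n-j) - ((x:ℤ)^j) • Dvec n n) ∈ Lsub n x y :=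
    sum_mem fun j hj =>
      AddSubgroup.zsmul_mem _ (lemB n x y j (by simpa [Nat.lt_succ_iff] using hj)) _
  have hrw : ∑ j ∈ Finset.range (n+1),
      (y:ℤ)^(n-j) • (((y:ℤ)^j) • Dvec n (n-j) - ((x:ℤ)^j) • Dvec n n)
      = -(((Fval n x y : ℤ)) • Dvec n n) := by
    have step : ∀ j ∈ Finset.range (n+1),
        (y:ℤ)^(n-j) • (((y:ℤ)^j) • Dvec n (n-j) - ((x:ℤ)^j) • Dvec n n)
        = (y:ℤ)^n • Dvec n (n-j) - ((x:ℤ)^j * (y:ℤ)^(n-j)) • Dvec n n := by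
      intro j hj
      have hj' : j ≤ n := by simpa [Nat.lt_succ_iff] using hj
      have h2 : n - j + j = n := by omega
      rw [smul_sub, smul_smul, smul_smul, ← pow_add, h2, mul_comm ((x:ℤ)^j)]
    rw [Finset.sum_congr rfl step, Finset.sum_sub_distrib, ← Finset.smul_sum,
      ← Finset.sum_smul]
    have hrefl : ∑ j ∈ Finset.range (n+1), Dvec n (n-j)
        = ∑ k ∈ Finset.range (n+1), Dvec n k := by
      rw [← Finset.sum_range_reflect]
      exact Finset.sum_congr rfl fun j hj => by
        have hj' := Finset.mem_range.mp hj
        have h : n - (n + 1 - 1 - j) = j := by omega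
        rw [h]
    rw [hrefl, Dsum n hn n le_rfl, dif_neg (lt_irrefl n), smul_zero, zero_sub]
    congr 1
    rw [Fval_reflect n x y]
    push_cast
    rfl
  rw [hrw, Dvec_n n hn] at hS
  simpa using (neg_mem hS : _)

theorem memW (n x y : ℕ) (hn : 1 ≤ n) :
    (x:ℤ)^(n-1) • Pi.single (⟨n-1, by omega⟩ : Fin n) (1:ℤ)
      - ((Fval (n-1) x y : ℤ)) • Pi.single (⟨0, hn⟩ : Fin n) (1:ℤ) ∈ Lsub n x y := by
  have hS : ∑ k ∈ Finset.range n,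
      (x:ℤ)^(n-1-k) • (((x:ℤ)^k) • Dvec n k - ((y:ℤ)^k) • Dvec n 0) ∈ Lsub n x y :=
    sum_mem fun k hk =>
      AddSubgroup.zsmul_mem _ (lemA_s15 n x y k (le_of_lt (Finset.mem_range.mp hk))) _
  have hrw : ∑ k ∈ Finset.range n,
      (x:ℤ)^(n-1-k) • (((x:ℤ)^k) • Dvec n k - ((y:ℤ)^k) • Dvec n 0)
      = (x:ℤ)^(n-1) • Pi.single (⟨n-1, by omega⟩ : Fin n) (1:ℤ)
        - ((Fval (n-1) x y : ℤ)) • Pi.single (⟨0, hn⟩ : Fin n) (1:ℤ) := by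
    have step : ∀ k ∈ Finset.range n,
        (x:ℤ)^(n-1-k) • (((x:ℤ)^k) • Dvec n k - ((y:ℤ)^k) • Dvec n 0)
        = (x:ℤ)^(n-1) • Dvec n k - ((x:ℤ)^(n-1-k) * (y:ℤ)^k) • Dvec n 0 := by
      intro k hk
      have hk' : k < n := Finset.mem_range.mp hk
      have h2 : n - 1 - k + k = n - 1 := by omega
      rw [smul_sub, smul_smul, smul_smul, ← pow_add, h2]
    have hn' : n = (n - 1) + 1 := by omega
    rw [Finset.sum_congr rfl step, Finset.sum_sub_distrib, ← Finset.smul_sum,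
      ← Finset.sum_smul]
    rw [show (Finset.range n) = Finset.range ((n-1)+1) by rw [← hn']]
    rw [Dsum n hn (n-1) (by omega), dif_pos (show n - 1 < n by omega), Dvec_zero n hn]
    congr 1
    rw [Fval]
    push_cast
    rfl
  rw [hrw] at hS
  exact hS

theorem Fval_succ_eq (n x y : ℕ) (hn : 1 ≤ n) :
    Fval n x y = x * Fval (n-1) x y + y^n := by
  rw [Fval, Fval, Finset.sum_range_succ, Nat.sub_self, pow_zero, one_mul, Finset.mul_sum]
  congr 1
  · rw [show n - 1 + 1 = n by omega]
    refine Finset.sum_congr rfl fun k hk => ?_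
    have hk' : k < n := Finset.mem_range.mp hk
    rw [← mul_assoc, ← pow_succ', show n - 1 - k + 1 = n - k by omega]

theorem Fval_pos (n x y : ℕ) (hx : 0 < x) (hy : 0 < y) : 0 < Fval n x y := by
  rw [Fval]
  refine Finset.sum_pos (fun k hk => ?_) ⟨0, by simp⟩
  positivity

theorem coprime_x_Fval (n x y : ℕ) (hn : 1 ≤ n) (hcop : Nat.Coprime x y) :
    Nat.Coprime x (Fval n x y) := by
  rw [Fval_succ_eq n x y hn, add_comm, mul_comm]
  rw [Nat.coprime_add_mul_right_right]
  exact hcop.pow_right n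

theorem Htop (n x y : ℕ) (hn : 1 ≤ n) (hcop : Nat.Coprime x y) :
    Lsub n x y ⊔ AddSubgroup.zmultiples (Pi.single (⟨0, hn⟩ : Fin n) (1:ℤ)) = ⊤ := by
  set g0 : Fin n → ℤ := Pi.single (⟨0, hn⟩ : Fin n) (1:ℤ) with hg0def
  set H := Lsub n x y ⊔ AddSubgroup.zmultiples g0 with hH
  have hLH : Lsub n x y ≤ H := le_sup_left
  have hg0 : g0 ∈ H := AddSubgroup.mem_sup_right (AddSubgroup.mem_zmultiples g0)
  set En1 : Fin n → ℤ := Pi.single (⟨n-1, by omega⟩ : Fin n) (1:ℤ) with hEn1def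
  -- En1 ∈ H
  have hxn1 : (x:ℤ)^(n-1) • En1 ∈ H := by
    have h1 := hLH (memW n x y hn)
    have : (x:ℤ)^(n-1) • En1
        = ((x:ℤ)^(n-1) • En1 - ((Fval (n-1) x y : ℤ)) • g0) + ((Fval (n-1) x y : ℤ)) • g0 := by
      abel
    rw [this]
    exact add_mem h1 (AddSubgroup.zsmul_mem _ hg0 _)
  have hFEn1 : ((Fval n x y : ℤ)) • En1 ∈ H := hLH (memFEn n x y hn)
  have hEn1 : En1 ∈ H := by
    have hcF : Nat.Coprime (x^(n-1)) (Fval n x y) :=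
      Nat.Coprime.pow_left _ (coprime_x_Fval n x y hn hcop)
    have hic : IsCoprime ((x:ℤ)^(n-1)) ((Fval n x y : ℤ)) := by
      have := Nat.isCoprime_iff_coprime.mpr hcF
      push_cast at this
      exact this
    obtain ⟨u, v, huv⟩ := hic
    have : En1 = u • ((x:ℤ)^(n-1) • En1) + v • (((Fval n x y : ℤ)) • En1) := by
      rw [smul_smul, smul_smul, ← add_smul, huv, one_smul]
    rw [this]
    exact add_mem (AddSubgroup.zsmul_mem _ hxn1 _) (AddSubgroup.zsmul_mem _ hFEn1 _)
  have hDn : Dvec n n ∈ H := by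
    rw [Dvec_n n hn]
    exact neg_mem hEn1
  have hD0 : Dvec n 0 ∈ H := by rw [Dvec_zero n hn]; exact hg0
  have hDk : ∀ k, k ≤ n → Dvec n k ∈ H := by
    intro k hk
    have hic : IsCoprime ((x:ℤ)^k) ((y:ℤ)^(n-k)) := by
      have := Nat.isCoprime_iff_coprime.mpr (Nat.Coprime.pow k (n-k) hcop)
      push_cast at this
      exact this
    obtain ⟨a, b, hab⟩ := hic
    have hx : (x:ℤ)^k • Dvec n k ∈ H := by
      have h1 := hLH (lemA_s15 n x y k hk)
      have : (x:ℤ)^k • Dvec n k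
          = ((x:ℤ)^k • Dvec n k - (y:ℤ)^k • Dvec n 0) + (y:ℤ)^k • Dvec n 0 := by abel
      rw [this]
      exact add_mem h1 (AddSubgroup.zsmul_mem _ hD0 _)
    have hy : (y:ℤ)^(n-k) • Dvec n k ∈ H := by
      have h1 := hLH (lemB n x y (n-k) (by omega))
      rw [show n - (n - k) = k by omega] at h1
      have : (y:ℤ)^(n-k) • Dvec n k
          = ((y:ℤ)^(n-k) • Dvec n k - (x:ℤ)^(n-k) • Dvec n n) + (x:ℤ)^(n-k) • Dvec n n := by
        abel
      rw [this]
      exact add_mem h1 (AddSubgroup.zsmul_mem _ hDn _)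
    have : Dvec n k = a • ((x:ℤ)^k • Dvec n k) + b • ((y:ℤ)^(n-k) • Dvec n k) := by
      rw [smul_smul, smul_smul, ← add_smul, hab, one_smul]
    rw [this]
    exact add_mem (AddSubgroup.zsmul_mem _ hx _) (AddSubgroup.zsmul_mem _ hy _)
  have hEi : ∀ i : Fin n, Pi.single i (1:ℤ) ∈ H := by
    intro i
    have hsum := Dsum n hn i (le_of_lt i.isLt)
    rw [dif_pos i.isLt] at hsum
    have : Pi.single i (1:ℤ) = ∑ k ∈ Finset.range ((i:ℕ)+1), Dvec n k := by
      rw [hsum]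
    rw [this]
    exact sum_mem fun k hk => hDk k (by have := Finset.mem_range.mp hk; omega)
  rw [AddSubgroup.eq_top_iff']
  intro a
  have : a = ∑ i : Fin n, a i • Pi.single i (1:ℤ) := by
    ext j
    simp [Pi.single_apply, Finset.sum_ite_eq', mul_comm]
  rw [this]
  exact sum_mem fun i _ => AddSubgroup.zsmul_mem _ (hEi i) _

def Wnat (n x y i : ℕ) : ℕ := ∑ j ∈ Finset.range (i+1), x^(n-1-j) * y^j

def psi (n x y : ℕ) : (Fin n → ℤ) →+ ℤ :=
  AddMonoidHom.mk' (fun a => ∑ i : Fin n, a i * (Wnat n x y (i:ℕ) : ℤ))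
    (by intro a b; simp [add_mul, Finset.sum_add_distrib])

theorem psi_single (n x y : ℕ) (j : Fin n) (c : ℤ) :
    psi n x y (Pi.single j c) = c * (Wnat n x y (j:ℕ) : ℤ) := by
  simp only [psi, AddMonoidHom.mk'_apply, Pi.single_apply, ite_mul, zero_mul]
  rw [Finset.sum_ite_eq' Finset.univ j (fun i => c * (Wnat n x y (i:ℕ) : ℤ))]
  simp

theorem psi_D_lt (n x y : ℕ) (k : ℕ) (hk : k < n) :
    psi n x y (Dvec n k) = (x:ℤ)^(n-1-k) * (y:ℤ)^k := by
  rcases Nat.eq_zero_or_pos k with rfl | hk0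
  · simp only [Dvec, dif_pos hk, dif_neg (by omega : ¬(0 < 0 ∧ 0 ≤ n))]
    rw [sub_zero, psi_single]
    simp [Wnat]
  · simp only [Dvec, dif_pos hk, dif_pos (show 0 < k ∧ k ≤ n by omega)]
    rw [map_sub, psi_single, psi_single, one_mul, one_mul]
    have : (Wnat n x y k : ℤ) = (Wnat n x y (k-1) : ℤ) + (x:ℤ)^(n-1-k) * (y:ℤ)^k := by
      rw [Wnat, Wnat, show k + 1 = (k-1+1)+1 by omega, Finset.sum_range_succ,
        show k - 1 + 1 = k by omega]
      push_cast
      ring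
    rw [this]
    ring

theorem psi_D_top (n x y : ℕ) (hn : 1 ≤ n) :
    psi n x y (Dvec n n) = -(Fval (n-1) x y : ℤ) := by
  simp only [Dvec, dif_neg (lt_irrefl n), dif_pos (show 0 < n ∧ n ≤ n by omega)]
  rw [zero_sub, map_neg, psi_single, one_mul]
  congr 1

theorem psi_v (n x y : ℕ) (hn : 1 ≤ n) (k : ℕ) (hk : k < n) :
    psi n x y (vvec n x y ⟨k, hk⟩) = if k + 1 = n then -(Fval n x y : ℤ) else 0 := by
  rw [← Dvec_rel n x y k hk, map_sub, map_zsmul, map_zsmul, psi_D_lt n x y k hk]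
  by_cases hkn : k + 1 = n
  · rw [if_pos hkn, hkn, psi_D_top n x y hn, show n-1-k = 0 by omega,
      show k = n - 1 by omega, Fval_succ_eq n x y hn]
    push_cast
    rw [show (y:ℤ)^n = (y:ℤ)*(y:ℤ)^(n-1) by rw [← pow_succ', show n-1+1 = n by omega]]
    simp only [smul_eq_mul]
    ring
  · rw [if_neg hkn, psi_D_lt n x y (k+1) (by omega)]
    have h1 : (x:ℤ) • ((x:ℤ)^(n-1-(k+1)) * (y:ℤ)^(k+1)) = (x:ℤ)^(n-1-k) * (y:ℤ)^(k+1) := by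
      rw [smul_eq_mul, ← mul_assoc, ← pow_succ', show n-1-(k+1)+1 = n-1-k by omega]
    have h2 : (y:ℤ) • ((x:ℤ)^(n-1-k) * (y:ℤ)^k) = (x:ℤ)^(n-1-k) * (y:ℤ)^(k+1) := by
      rw [smul_eq_mul, pow_succ]
      ring
    rw [h1, h2, sub_self]

theorem Wnat_zero (n x y : ℕ) : Wnat n x y 0 = x^(n-1) := by simp [Wnat]

/-- The quotient group `ℤ^n / ⟨v_1,…,v_n⟩` (the sandpile group of
the path multigraph `P^{x,y}_n`) is cyclic of order `F = Σ_{k=0}^n x^(n−k)·y^k`. -/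
theorem sandpile_group_cyclic_of_order_F
    (n x y : ℕ) (hn : 1 ≤ n) (hx : 0 < x) (hxy : x < y) (hcop : Nat.Coprime x y) :
    IsAddCyclic ((Fin n → ℤ) ⧸ AddSubgroup.closure (Set.range (vvec n x y))) ∧
    Nat.card ((Fin n → ℤ) ⧸ AddSubgroup.closure (Set.range (vvec n x y)))
      = Fval n x y := by
  have hy : 0 < y := lt_trans hx hxy
  have Fpos : 0 < Fval n x y := Fval_pos n x y hx hy
  haveI : NeZero (Fval n x y) := ⟨Fpos.ne'⟩
  have hcF : Nat.Coprime (x^(n-1)) (Fval n x y) :=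
    Nat.Coprime.pow_left _ (coprime_x_Fval n x y hn hcop)
  set L : AddSubgroup (Fin n → ℤ) := AddSubgroup.closure (Set.range (vvec n x y)) with hLdef
  set g0 : Fin n → ℤ := Pi.single (⟨0, hn⟩ : Fin n) (1:ℤ) with hg0def
  set π := QuotientAddGroup.mk' L with hπdef
  set g := π g0 with hgdef
  -- every element of the quotient is a multiple of g
  have hgen : ∀ z : (Fin n → ℤ) ⧸ L, ∃ m : ℤ, m • g = z := by
    intro z
    obtain ⟨a, rfl⟩ := QuotientAddGroup.mk'_surjective L z
    have ha : a ∈ Lsub n x y ⊔ AddSubgroup.zmultiples g0 := by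
      rw [Htop n x y hn hcop]; trivial
    obtain ⟨l, hl, w, hw, rfl⟩ := AddSubgroup.mem_sup.mp ha
    obtain ⟨m, rfl⟩ := AddSubgroup.mem_zmultiples_iff.mp hw
    refine ⟨m, ?_⟩
    have hl0 : π l = 0 := (QuotientAddGroup.eq_zero_iff l).mpr hl
    rw [map_add, map_zsmul, hl0, zero_add]
  -- the homomorphism to ZMod F
  set φ : (Fin n → ℤ) →+ ZMod (Fval n x y) :=
    (Int.castAddHom (ZMod (Fval n x y))).comp (psi n x y) with hφdef
  have hker : L ≤ φ.ker := by
    rw [hLdef, AddSubgroup.closure_le]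
    rintro v ⟨k, rfl⟩
    have hv := psi_v n x y hn k.val k.isLt
    rw [Fin.eta] at hv
    show ((psi n x y (vvec n x y k) : ℤ) : ZMod (Fval n x y)) = 0
    rw [hv]
    split_ifs <;> simp [ZMod.natCast_self]
  set q1 := QuotientAddGroup.lift L φ hker with hq1def
  have hq1 : Function.Surjective q1 := by
    intro z
    set u := ZMod.unitOfCoprime (x^(n-1)) hcF with hudef
    obtain ⟨c, hc⟩ := ZMod.intCast_surjective (z * ((u⁻¹ : (ZMod (Fval n x y))ˣ) : ZMod (Fval n x y)))
    refine ⟨π (c • g0), ?_⟩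
    have : q1 (π (c • g0)) = φ (c • g0) := rfl
    rw [this]
    show ((psi n x y (c • g0) : ℤ) : ZMod (Fval n x y)) = z
    rw [map_zsmul, hg0def, psi_single, one_mul, Wnat_zero, smul_eq_mul,
      Int.cast_mul, Int.cast_natCast, hc, ← ZMod.coe_unitOfCoprime (x^(n-1)) hcF]
    exact Units.inv_mul_cancel_right z u
  have hFg : (zmultiplesHom _ g) ((Fval n x y : ℤ)) = 0 := by
    show ((Fval n x y : ℤ)) • g = 0
    rw [hgdef, ← map_zsmul]
    exact (QuotientAddGroup.eq_zero_iff _).mpr (memFE0 n x y hn)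
  set q2 : ZMod (Fval n x y) →+ ((Fin n → ℤ) ⧸ L) :=
    ZMod.lift (Fval n x y) ⟨zmultiplesHom _ g, hFg⟩ with hq2def
  have hq2 : Function.Surjective q2 := by
    intro z
    obtain ⟨m, hm⟩ := hgen z
    exact ⟨((m : ℤ) : ZMod (Fval n x y)), by rw [hq2def, ZMod.lift_coe]; exact hm⟩
  haveI : Finite ((Fin n → ℤ) ⧸ L) := Finite.of_surjective _ hq2
  constructor
  · exact ⟨⟨g, fun z => by
      obtain ⟨m, hm⟩ := hgen z
      exact AddSubgroup.mem_zmultiples_iff.mpr ⟨m, hm⟩⟩⟩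
  · refine le_antisymm ?_ ?_
    · calc Nat.card ((Fin n → ℤ) ⧸ L) ≤ Nat.card (ZMod (Fval n x y)) :=
            Nat.card_le_card_of_surjective q2 hq2
        _ = Fval n x y := Nat.card_zmod _
    · calc Fval n x y = Nat.card (ZMod (Fval n x y)) := (Nat.card_zmod _).symm
        _ ≤ Nat.card ((Fin n → ℤ) ⧸ L) := Nat.card_le_card_of_surjective q1 hq1
end

section
/- There is a bijection ψ from the set of acyclic rotor configurations of the path multigraph P^{x,y}_n onto L_a^n such that g(ρ) = val(ψ(ρ)) for every acyclic rotor configuration ρ. In particular, the number of acyclic rotor configurations of P^{x,y}_n equals F. -/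
/-- A rotor configuration `ρ : {1,…,n} → {0,…,x+y−1}` (encoded with `ρ k` the
arc chosen at vertex `u_{k+1}` for `k : Fin n`) is acyclic if there is no
`k ∈ {1,…,n−1}` with `ρ(k) ≤ x−1` and `ρ(k+1) ≥ x`. -/
def AcyclicConfig (n x : ℕ) (ρ : Fin n → ℕ) : Prop :=
  ∀ i j : Fin n, (j : ℕ) = (i : ℕ) + 1 → ¬(ρ i < x ∧ x ≤ ρ j)

namespace AL

lemma card_filter_lt (n a : ℕ) (h : a ≤ n) :
    (Finset.univ.filter (fun k : Fin n => (k : ℕ) < a)).card = a := by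
  rcases Nat.eq_zero_or_pos n with hn | hn
  · subst hn; interval_cases a; simp
  have key : (Finset.univ.filter (fun k : Fin n => (k : ℕ) < a)).card
      = (Finset.range a).card := by
    apply Finset.card_nbij' (fun k : Fin n => (k : ℕ)) (fun m => (⟨min m (n-1), by omega⟩ : Fin n))
    · intro k hk; simp only [Finset.mem_coe, Finset.mem_filter] at hk; simp [Finset.mem_range, hk.2]
    · intro m hm; simp only [Finset.mem_coe, Finset.mem_range] at hm; simp; omega
    · intro k hk; simp only [Finset.mem_coe, Finset.mem_filter] at hk
      apply Fin.ext; simp; omega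
    · intro m hm; simp only [Finset.mem_coe, Finset.mem_range] at hm; simp; omega
  simpa using key

variable {n x y : ℕ}

def acard (n x : ℕ) (ρ : Fin n → ℕ) : ℕ :=
  (Finset.univ.filter (fun k : Fin n => x ≤ ρ k)).card

lemma acard_le (ρ : Fin n → ℕ) : acard n x ρ ≤ n := by
  simpa [acard] using (Finset.card_filter_le Finset.univ (fun k : Fin n => x ≤ ρ k))

lemma dcl {ρ : Fin n → ℕ} (ha : AcyclicConfig n x ρ) :
    ∀ d : ℕ, ∀ i j : Fin n, (j : ℕ) = (i : ℕ) + d → x ≤ ρ j → x ≤ ρ i := by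
  intro d
  induction d with
  | zero => intro i j hij h; have : j = i := Fin.ext (by omega); rwa [← this]
  | succ d ih =>
    intro i j hij h
    have hlt : (i : ℕ) + d < n := by have := j.isLt; omega
    set j' : Fin n := ⟨(i : ℕ) + d, hlt⟩
    have h' : x ≤ ρ j' := by
      by_contra hc
      exact ha j' j (by simp [j']; omega) ⟨by omega, h⟩
    exact ih i j' rfl h'

lemma mem_iff {ρ : Fin n → ℕ} (ha : AcyclicConfig n x ρ) (k : Fin n) :
    x ≤ ρ k ↔ (k : ℕ) < acard n x ρ := by
  constructor
  · intro h
    have hsub : (Finset.univ.filter (fun i : Fin n => (i : ℕ) < (k : ℕ) + 1)) ⊆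
        (Finset.univ.filter (fun i : Fin n => x ≤ ρ i)) := by
      intro i hi
      simp only [Finset.mem_filter, Finset.mem_univ, true_and] at hi ⊢
      exact dcl ha ((k : ℕ) - (i : ℕ)) i k (by omega) h
    have := Finset.card_le_card hsub
    rw [card_filter_lt n ((k : ℕ) + 1) (by omega)] at this
    simpa [acard] using this
  · intro h
    by_contra hc
    push_neg at hc
    have hsub : (Finset.univ.filter (fun i : Fin n => x ≤ ρ i)) ⊆
        (Finset.univ.filter (fun i : Fin n => (i : ℕ) < (k : ℕ))) := by
      intro i hi
      simp only [Finset.mem_filter, Finset.mem_univ, true_and] at hi ⊢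
      by_contra hik
      exact absurd (dcl ha ((i : ℕ) - (k : ℕ)) k i (by omega) hi) (by omega)
    have := Finset.card_le_card hsub
    rw [card_filter_lt n (k : ℕ) (le_of_lt k.isLt)] at this
    have : acard n x ρ ≤ (k : ℕ) := by simpa [acard] using this
    omega

def rho' (n : ℕ) (ρ : Fin n → ℕ) (i : ℕ) : ℕ := if h : i < n then ρ ⟨i, h⟩ else 0

def cfun (n x y : ℕ) (ρ : Fin n → ℕ) (i : ℕ) : ℕ :=
  if i < acard n x ρ then x + y - rho' n ρ i
  else if acard n x ρ < i ∧ i ≤ n then rho' n ρ (i - 1) else 0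

def psi (n x y : ℕ) (ρ : Fin n → ℕ) : Fin (n + 2) → ℕ := fun i => cfun n x y ρ (i : ℕ)

lemma gk_left {k j : ℕ} (hk : k < n) (hj : x ≤ j) :
    gk n x y (k + 1) j = (x + y - j) * x ^ (n - k) * y ^ k := by
  unfold gk
  by_cases h : j ≤ x
  · have hjx : j = x := le_antisymm h hj
    rw [if_pos h, hjx, show x + y - x = y from by omega,
      show n - k = n - (k + 1) + 1 from by omega, pow_succ, pow_succ]
    ring
  · rw [if_neg h, show n - (k + 1) + 1 = n - k from by omega,
      show k + 1 - 1 = k from rfl]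

lemma gk_right {k j : ℕ} (hj : j ≤ x) :
    gk n x y (k + 1) j = j * x ^ (n - (k + 1)) * y ^ (k + 1) := by
  rw [gk, if_pos hj]

lemma val_eq (ρ : Fin n → ℕ) (ha : AcyclicConfig n x ρ) :
    gRotor n x y ρ = tupleVal n x y (psi n x y ρ) := by
  set a := acard n x ρ with hadef
  have han : a ≤ n := acard_le ρ
  have hL : gRotor n x y ρ = ∑ k ∈ Finset.range n, gk n x y (k + 1) (rho' n ρ k) := by
    rw [gRotor, ← Fin.sum_univ_eq_sum_range (fun k => gk n x y (k + 1) (rho' n ρ k)) n]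
    apply Finset.sum_congr rfl
    intro k _
    congr 1
    simp [rho']
  have hR : tupleVal n x y (psi n x y ρ)
      = ∑ i ∈ Finset.range (n + 1), cfun n x y ρ i * x ^ (n - i) * y ^ i := by
    rw [tupleVal,
      ← Fin.sum_univ_eq_sum_range (fun i => cfun n x y ρ i * x ^ (n - i) * y ^ i) (n + 1)]
    apply Finset.sum_congr rfl
    intro k _
    simp [psi]
  have hp1 : ∀ k ∈ Finset.Ico 0 a,
      gk n x y (k + 1) (rho' n ρ k) = cfun n x y ρ k * x ^ (n - k) * y ^ k := by
    intro k hk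
    simp only [Finset.mem_Ico] at hk
    have hkn : k < n := lt_of_lt_of_le hk.2 han
    have hx' : x ≤ rho' n ρ k := by
      have h1 : x ≤ ρ ⟨k, hkn⟩ := (mem_iff ha ⟨k, hkn⟩).2 (by simpa using hk.2)
      simpa [rho', hkn] using h1
    rw [gk_left hkn hx', cfun, if_pos hk.2]
  have hp2 : ∑ i ∈ Finset.Ico a (a + 1), cfun n x y ρ i * x ^ (n - i) * y ^ i = 0 := by
    rw [Nat.Ico_succ_singleton, Finset.sum_singleton, cfun,
      if_neg (by omega), if_neg (by omega), zero_mul, zero_mul]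
  have hp3 : ∑ k ∈ Finset.Ico a n, gk n x y (k + 1) (rho' n ρ k)
      = ∑ i ∈ Finset.Ico (a + 1) (n + 1), cfun n x y ρ i * x ^ (n - i) * y ^ i := by
    rw [Finset.sum_Ico_eq_sum_range, Finset.sum_Ico_eq_sum_range,
      show n + 1 - (a + 1) = n - a from by omega]
    apply Finset.sum_congr rfl
    intro j hj
    simp only [Finset.mem_range] at hj
    have hkn : a + j < n := by omega
    have hxlt : rho' n ρ (a + j) ≤ x := by
      have hnot : ¬ x ≤ ρ ⟨a + j, hkn⟩ := by
        rw [mem_iff ha]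
        simp only [Fin.val_mk, ← hadef]
        omega
      have he : rho' n ρ (a + j) = ρ ⟨a + j, hkn⟩ := by simp [rho', hkn]
      omega
    rw [gk_right hxlt]
    have hc : cfun n x y ρ (a + 1 + j) = rho' n ρ (a + j) := by
      rw [cfun, if_neg (by omega), if_pos ⟨by omega, by omega⟩]
      congr 1
      omega
    rw [hc, show a + 1 + j = a + j + 1 from by omega]
  rw [hL, hR, Finset.range_eq_Ico, Finset.range_eq_Ico,
    ← Finset.sum_Ico_consecutive _ (Nat.zero_le a) han,
    ← Finset.sum_Ico_consecutive _ (Nat.zero_le a) (by omega : a ≤ n + 1),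
    ← Finset.sum_Ico_consecutive _ (by omega : a ≤ a + 1) (by omega : a + 1 ≤ n + 1),
    Finset.sum_congr rfl hp1, hp2, hp3]
  omega

lemma psi_mem (ρ : Fin n → ℕ) (hb : ∀ k, ρ k < x + y) (ha : AcyclicConfig n x ρ) :
    psi n x y ρ ∈ La n x y := by
  set a := acard n x ρ with hadef
  have han : a ≤ n := acard_le ρ
  refine ⟨?_, ⟨a, by omega⟩, ?_, ?_, ?_⟩
  · show cfun n x y ρ ((Fin.last (n + 1) : Fin (n + 2)) : ℕ) = 0
    rw [Fin.val_last, cfun, if_neg (by omega), if_neg (by omega)]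
  · intro i hi
    simp only [Fin.val_mk] at hi
    have hin : (i : ℕ) < n := lt_of_lt_of_le hi han
    have hx' : x ≤ ρ ⟨(i : ℕ), hin⟩ := (mem_iff ha ⟨(i : ℕ), hin⟩).2 (by simpa using hi)
    have hbb : ρ ⟨(i : ℕ), hin⟩ < x + y := hb _
    show 1 ≤ cfun n x y ρ (i : ℕ) ∧ cfun n x y ρ (i : ℕ) ≤ y
    rw [cfun, if_pos hi]
    have : rho' n ρ (i : ℕ) = ρ ⟨(i : ℕ), hin⟩ := by simp [rho', hin]
    omega
  · show cfun n x y ρ (((⟨a, by omega⟩ : Fin (n + 1)).castSucc : Fin (n + 2)) : ℕ) = 0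
    simp only [Fin.coe_castSucc, Fin.val_mk]
    rw [cfun, if_neg (by omega), if_neg (by omega)]
  · intro i hi1 hi2
    simp only [Fin.val_mk] at hi1
    have hin : (i : ℕ) - 1 < n := by omega
    have hx' : ¬ x ≤ ρ ⟨(i : ℕ) - 1, hin⟩ := by
      rw [mem_iff ha]
      simp only [Fin.val_mk, ← hadef]
      omega
    show cfun n x y ρ (i : ℕ) < x
    rw [cfun, if_neg (by omega), if_pos ⟨hi1, hi2⟩]
    have : rho' n ρ ((i : ℕ) - 1) = ρ ⟨(i : ℕ) - 1, hin⟩ := by simp [rho', hin]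
    omega


lemma psi_inj (ρ1 ρ2 : Fin n → ℕ) (hb1 : ∀ k, ρ1 k < x + y) (hb2 : ∀ k, ρ2 k < x + y)
    (ha1 : AcyclicConfig n x ρ1) (ha2 : AcyclicConfig n x ρ2)
    (h : psi n x y ρ1 = psi n x y ρ2) : ρ1 = ρ2 := by
  have han1 : acard n x ρ1 ≤ n := acard_le ρ1
  have han2 : acard n x ρ2 ≤ n := acard_le ρ2
  have hcf : ∀ i : ℕ, i < n + 2 → cfun n x y ρ1 i = cfun n x y ρ2 i := by
    intro i hi
    have := congrFun h ⟨i, hi⟩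
    simpa [psi] using this
  have hrb1 : ∀ i : ℕ, i < n → rho' n ρ1 i < x + y := by
    intro i hi; simpa [rho', hi] using hb1 ⟨i, hi⟩
  have hrb2 : ∀ i : ℕ, i < n → rho' n ρ2 i < x + y := by
    intro i hi; simpa [rho', hi] using hb2 ⟨i, hi⟩
  have haa : acard n x ρ1 = acard n x ρ2 := by
    by_contra hne
    rcases Nat.lt_or_ge (acard n x ρ1) (acard n x ρ2) with hlt | hge
    · have h1 : cfun n x y ρ1 (acard n x ρ1) = 0 := by
        rw [cfun, if_neg (by omega), if_neg (by omega)]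
      have h2 : cfun n x y ρ2 (acard n x ρ1) = x + y - rho' n ρ2 (acard n x ρ1) := by
        rw [cfun, if_pos hlt]
      have h3 := hrb2 (acard n x ρ1) (by omega)
      have h4 := hcf (acard n x ρ1) (by omega)
      omega
    · have hlt : acard n x ρ2 < acard n x ρ1 := by omega
      have h1 : cfun n x y ρ2 (acard n x ρ2) = 0 := by
        rw [cfun, if_neg (by omega), if_neg (by omega)]
      have h2 : cfun n x y ρ1 (acard n x ρ2) = x + y - rho' n ρ1 (acard n x ρ2) := by
        rw [cfun, if_pos hlt]
      have h3 := hrb1 (acard n x ρ2) (by omega)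
      have h4 := hcf (acard n x ρ2) (by omega)
      omega
  funext i
  have hrr1 : rho' n ρ1 (i : ℕ) = ρ1 i := by simp [rho']
  have hrr2 : rho' n ρ2 (i : ℕ) = ρ2 i := by simp [rho']
  by_cases hi : (i : ℕ) < acard n x ρ1
  · have h1 : cfun n x y ρ1 (i : ℕ) = x + y - rho' n ρ1 (i : ℕ) := by
      rw [cfun, if_pos hi]
    have h2 : cfun n x y ρ2 (i : ℕ) = x + y - rho' n ρ2 (i : ℕ) := by
      rw [cfun, if_pos (haa ▸ hi)]
    have h3 := hcf (i : ℕ) (by have := i.isLt; omega)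
    have h4 := hrb1 (i : ℕ) i.isLt
    have h5 := hrb2 (i : ℕ) i.isLt
    omega
  · have hcond : acard n x ρ1 < (i : ℕ) + 1 ∧ (i : ℕ) + 1 ≤ n := ⟨by omega, by have := i.isLt; omega⟩
    have h1 : cfun n x y ρ1 ((i : ℕ) + 1) = rho' n ρ1 (i : ℕ) := by
      rw [cfun, if_neg (by omega), if_pos hcond]
      congr 1
    have h2 : cfun n x y ρ2 ((i : ℕ) + 1) = rho' n ρ2 (i : ℕ) := by
      rw [cfun, if_neg (by omega), if_pos (haa ▸ hcond)]
      congr 1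
    have h3 := hcf ((i : ℕ) + 1) (by have := i.isLt; omega)
    omega

lemma psi_surj (c : Fin (n + 2) → ℕ) (hc : c ∈ La n x y) :
    ∃ ρ : Fin n → ℕ, (∀ k, ρ k < x + y) ∧ AcyclicConfig n x ρ ∧ psi n x y ρ = c := by
  obtain ⟨hlast, k, hpre, hzero, hsuf⟩ := hc
  have hKn : (k : ℕ) ≤ n := by have := k.isLt; omega
  set ρ : Fin n → ℕ := fun i =>
    if (i : ℕ) < (k : ℕ) then x + y - c ⟨(i : ℕ), by have := i.isLt; omega⟩
    else c ⟨(i : ℕ) + 1, by have := i.isLt; omega⟩ with hρ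
  have hρlt : ∀ i : Fin n, (i : ℕ) < (k : ℕ) →
      x ≤ ρ i ∧ ρ i < x + y := by
    intro i hi
    have hp := hpre ⟨(i : ℕ), by have := i.isLt; omega⟩ (by simpa using hi)
    rw [hρ]
    simp only [if_pos hi]
    omega
  have hρge : ∀ i : Fin n, ¬ (i : ℕ) < (k : ℕ) → ρ i < x := by
    intro i hi
    have hs := hsuf ⟨(i : ℕ) + 1, by have := i.isLt; omega⟩ (by simp; omega)
      (by show (i : ℕ) + 1 ≤ n; have := i.isLt; omega)
    rw [hρ]
    simp only [if_neg hi]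
    simpa using hs
  have hb : ∀ i : Fin n, ρ i < x + y := by
    intro i
    by_cases hi : (i : ℕ) < (k : ℕ)
    · exact (hρlt i hi).2
    · have := hρge i hi; omega
  have hac : AcyclicConfig n x ρ := by
    intro i j hij ⟨h1, h2⟩
    by_cases hi : (i : ℕ) < (k : ℕ)
    · have := (hρlt i hi).1; omega
    · have hj : ¬ (j : ℕ) < (k : ℕ) := by omega
      have := hρge j hj; omega
  have hacd : acard n x ρ = (k : ℕ) := by
    have hfe : (Finset.univ.filter (fun t : Fin n => x ≤ ρ t))
        = (Finset.univ.filter (fun t : Fin n => (t : ℕ) < (k : ℕ))) := by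
      ext t
      simp only [Finset.mem_filter, Finset.mem_univ, true_and]
      constructor
      · intro ht
        by_contra htk
        have := hρge t htk; omega
      · intro ht
        exact (hρlt t ht).1
    rw [acard, hfe, card_filter_lt n (k : ℕ) hKn]
  refine ⟨ρ, hb, hac, ?_⟩
  funext i
  show cfun n x y ρ (i : ℕ) = c i
  rcases Nat.lt_trichotomy (i : ℕ) (k : ℕ) with hik | hik | hik
  · have hin : (i : ℕ) < n := by omega
    have hrr : rho' n ρ (i : ℕ) = ρ ⟨(i : ℕ), hin⟩ := by simp [rho', hin]
    rw [cfun, hacd, if_pos hik, hrr, hρ]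
    simp only [if_pos hik]
    have hieq : (⟨((⟨(i : ℕ), hin⟩ : Fin n) : ℕ), by omega⟩ : Fin (n + 2)) = i :=
      Fin.ext (by simp)
    rw [hieq]
    have hp := hpre i hik
    omega
  · rw [cfun, hacd, if_neg (by omega), if_neg (by omega)]
    have : i = k.castSucc := Fin.ext (by simp [hik])
    rw [this, hzero]
  · by_cases hin : (i : ℕ) ≤ n
    · have hin' : (i : ℕ) - 1 < n := by omega
      have hrr : rho' n ρ ((i : ℕ) - 1) = ρ ⟨(i : ℕ) - 1, hin'⟩ := by simp [rho', hin']
      rw [cfun, hacd, if_neg (by omega), if_pos ⟨hik, hin⟩, hrr, hρ]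
      simp only [Fin.val_mk, if_neg (show ¬ (i : ℕ) - 1 < (k : ℕ) from by omega)]
      congr 1
      exact Fin.ext (by simp; omega)
    · have hieq : (i : ℕ) = n + 1 := by have := i.isLt; omega
      rw [cfun, hacd, if_neg (by omega), if_neg (by omega)]
      have : i = Fin.last (n + 1) := Fin.ext (by simp [hieq])
      rw [this, hlast]

lemma sigma_helper (p q : Fin (n + 1)) (h : p = q)
    (F : (Fin (p : ℕ) → Fin y) × (Fin (n - (p : ℕ)) → Fin x))
    (G : (Fin (q : ℕ) → Fin y) × (Fin (n - (q : ℕ)) → Fin x))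
    (h1 : ∀ (i : ℕ) (hp : i < (p : ℕ)) (hq : i < (q : ℕ)), (F.1 ⟨i, hp⟩ : ℕ) = G.1 ⟨i, hq⟩)
    (h2 : ∀ (i : ℕ) (hp : i < n - (p : ℕ)) (hq : i < n - (q : ℕ)),
      (F.2 ⟨i, hp⟩ : ℕ) = G.2 ⟨i, hq⟩) :
    (⟨p, F⟩ : Σ a : Fin (n + 1), (Fin (a : ℕ) → Fin y) × (Fin (n - (a : ℕ)) → Fin x)) = ⟨q, G⟩ := by
  subst h
  have hF : F = G := by
    apply Prod.ext
    · funext i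
      exact Fin.ext (by simpa using h1 (i : ℕ) i.isLt i.isLt)
    · funext i
      exact Fin.ext (by simpa using h2 (i : ℕ) i.isLt i.isLt)
  rw [hF]

def inv0 (n x y : ℕ) (a : Fin (n + 1)) (f : Fin (a : ℕ) → Fin y)
    (g : Fin (n - (a : ℕ)) → Fin x) : Fin n → ℕ := fun i =>
  if h : (i : ℕ) < (a : ℕ) then x + (f ⟨(i : ℕ), h⟩ : ℕ)
  else (g ⟨(i : ℕ) - (a : ℕ), by have := i.isLt; omega⟩ : ℕ)

lemma inv0_pos {a : Fin (n + 1)} {f : Fin (a : ℕ) → Fin y} {g : Fin (n - (a : ℕ)) → Fin x}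
    {m : ℕ} (hm : m < n) (h : m < (a : ℕ)) :
    inv0 n x y a f g ⟨m, hm⟩ = x + (f ⟨m, h⟩ : ℕ) := dif_pos h

lemma inv0_neg {a : Fin (n + 1)} {f : Fin (a : ℕ) → Fin y} {g : Fin (n - (a : ℕ)) → Fin x}
    {m : ℕ} (hm : m < n) (h : ¬ m < (a : ℕ)) :
    inv0 n x y a f g ⟨m, hm⟩ = (g ⟨m - (a : ℕ), by omega⟩ : ℕ) := dif_neg h

lemma inv0_lt {a : Fin (n + 1)} {f : Fin (a : ℕ) → Fin y} {g : Fin (n - (a : ℕ)) → Fin x}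
    (i : Fin n) : inv0 n x y a f g i < x + y := by
  obtain ⟨m, hm⟩ := i
  by_cases h : m < (a : ℕ)
  · rw [inv0_pos hm h]
    have := (f ⟨m, h⟩).isLt
    omega
  · rw [inv0_neg hm h]
    have := (g ⟨m - (a : ℕ), by omega⟩).isLt
    omega

lemma inv0_acyclic {a : Fin (n + 1)} {f : Fin (a : ℕ) → Fin y} {g : Fin (n - (a : ℕ)) → Fin x} :
    AcyclicConfig n x (inv0 n x y a f g) := by
  intro i j hij hcon
  obtain ⟨m, hm⟩ := i
  obtain ⟨l, hl⟩ := j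
  simp only [Fin.val_mk] at hij
  subst hij
  obtain ⟨h1, h2⟩ := hcon
  by_cases h : m < (a : ℕ)
  · rw [inv0_pos hm h] at h1
    omega
  · have hj : ¬ m + 1 < (a : ℕ) := by omega
    rw [inv0_neg hl hj] at h2
    have := (g ⟨m + 1 - (a : ℕ), by omega⟩).isLt
    omega

lemma inv0_acard {a : Fin (n + 1)} {f : Fin (a : ℕ) → Fin y} {g : Fin (n - (a : ℕ)) → Fin x} :
    acard n x (inv0 n x y a f g) = (a : ℕ) := by
  have hfe : (Finset.univ.filter (fun t : Fin n => x ≤ inv0 n x y a f g t))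
      = (Finset.univ.filter (fun t : Fin n => (t : ℕ) < (a : ℕ))) := by
    ext t
    obtain ⟨m, hm⟩ := t
    simp only [Finset.mem_filter, Finset.mem_univ, true_and, Fin.val_mk]
    by_cases h : m < (a : ℕ)
    · rw [inv0_pos hm h]
      constructor
      · intro _; exact h
      · intro _; omega
    · rw [inv0_neg hm h]
      have := (g ⟨m - (a : ℕ), by omega⟩).isLt
      constructor
      · intro hcon; omega
      · intro hcon; omega
  rw [acard, hfe, card_filter_lt n (a : ℕ) (by have := a.isLt; omega)]

def eqv (n x y : ℕ) :
    {ρ : Fin n → ℕ // (∀ k : Fin n, ρ k < x + y) ∧ AcyclicConfig n x ρ} ≃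
      Σ a : Fin (n + 1), (Fin (a : ℕ) → Fin y) × (Fin (n - (a : ℕ)) → Fin x) where
  toFun := fun ⟨ρ, hb, hac⟩ =>
    ⟨⟨acard n x ρ, by have := acard_le (x := x) ρ; omega⟩,
     fun i => ⟨ρ ⟨(i : ℕ), by
         have h := acard_le (x := x) ρ
         have h2 := i.isLt
         simp only [Fin.val_mk] at h2
         omega⟩ - x, by
       have hin : (i : ℕ) < n := by
         have h := acard_le (x := x) ρ
         have h2 := i.isLt
         simp only [Fin.val_mk] at h2
         omega
       have h2 := i.isLt
       simp only [Fin.val_mk] at h2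
       have hxle : x ≤ ρ ⟨(i : ℕ), hin⟩ :=
         (mem_iff hac ⟨(i : ℕ), hin⟩).2 (by simpa using h2)
       have := hb ⟨(i : ℕ), hin⟩
       omega⟩,
     fun j => ⟨ρ ⟨acard n x ρ + (j : ℕ), by
         have h2 := j.isLt
         simp only [Fin.val_mk] at h2
         omega⟩, by
       have h2 := j.isLt
       simp only [Fin.val_mk] at h2
       have hin : acard n x ρ + (j : ℕ) < n := by omega
       by_contra hcon
       have hxle : x ≤ ρ ⟨acard n x ρ + (j : ℕ), hin⟩ := by omega
       have := (mem_iff hac ⟨acard n x ρ + (j : ℕ), hin⟩).1 hxle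
       simp only [Fin.val_mk] at this
       omega⟩⟩
  invFun := fun ⟨a, f, g⟩ => ⟨inv0 n x y a f g, fun i => inv0_lt i, inv0_acyclic⟩
  left_inv := by
    rintro ⟨ρ, hb, hac⟩
    apply Subtype.ext
    funext i
    obtain ⟨m, hm⟩ := i
    dsimp only
    by_cases h : m < acard n x ρ
    · rw [inv0_pos hm h]
      dsimp only
      show x + (ρ ⟨m, hm⟩ - x) = ρ ⟨m, hm⟩
      have hxle : x ≤ ρ ⟨m, hm⟩ := (mem_iff hac ⟨m, hm⟩).2 (by simpa using h)
      omega
    · rw [inv0_neg hm h]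
      dsimp only
      show ρ ⟨acard n x ρ + (m - acard n x ρ), by omega⟩ = ρ ⟨m, hm⟩
      congr 1
      exact Fin.ext (by simp; omega)
  right_inv := by
    rintro ⟨a, f, g⟩
    dsimp only
    have hA : acard n x (inv0 n x y a f g) = (a : ℕ) := inv0_acard
    apply sigma_helper _ _ (Fin.ext (by simpa using hA))
    · intro i hp hq
      dsimp only
      rw [inv0_pos (by have := a.isLt; omega) hq]
      omega
    · intro i hp hq
      dsimp only
      rw [inv0_neg (by omega) (by omega)]
      congr 2
      exact Fin.ext (by simp; omega)



end AL


/-- There is a bijection `ψ` from the set of acyclic rotor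
configurations of `P^{x,y}_n` onto `L_a^n` such that `g(ρ) = val(ψ(ρ))` for
every acyclic rotor configuration `ρ`. In particular the number of acyclic
rotor configurations equals `F`. -/
theorem acyclic_bijection_La
    (n x y : ℕ) (hn : 1 ≤ n) (hx : 0 < x) (hxy : x < y) (hcop : Nat.Coprime x y) :
    (∃ ψ : {ρ : Fin n → ℕ // (∀ k : Fin n, ρ k < x + y) ∧ AcyclicConfig n x ρ} →
        ↥(La n x y),
      Function.Bijective ψ ∧
      ∀ ρ, gRotor n x y ρ.val = tupleVal n x y (ψ ρ).val) ∧
    Nat.card {ρ : Fin n → ℕ // (∀ k : Fin n, ρ k < x + y) ∧ AcyclicConfig n x ρ}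
      = Fval n x y := by
  constructor
  · refine ⟨fun ρh => ⟨AL.psi n x y ρh.1, AL.psi_mem ρh.1 ρh.2.1 ρh.2.2⟩, ⟨?_, ?_⟩, ?_⟩
    · intro ρ1 ρ2 h
      apply Subtype.ext
      exact AL.psi_inj ρ1.1 ρ2.1 ρ1.2.1 ρ2.2.1 ρ1.2.2 ρ2.2.2
        (congrArg Subtype.val h)
    · rintro ⟨c, hc⟩
      obtain ⟨ρ, hb, hac, heq⟩ := AL.psi_surj c hc
      exact ⟨⟨ρ, hb, hac⟩, Subtype.ext heq⟩
    · intro ρ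
      exact AL.val_eq ρ.1 ρ.2.2
  · rw [Nat.card_congr (AL.eqv n x y), Nat.card_eq_fintype_card, Fintype.card_sigma]
    have hca : ∀ a : Fin (n + 1),
        Fintype.card ((Fin (a : ℕ) → Fin y) × (Fin (n - (a : ℕ)) → Fin x))
          = y ^ (a : ℕ) * x ^ (n - (a : ℕ)) := by
      intro a
      rw [Fintype.card_prod, Fintype.card_fun, Fintype.card_fun, Fintype.card_fin,
        Fintype.card_fin, Fintype.card_fin, Fintype.card_fin]
    rw [Finset.sum_congr rfl (fun a _ => hca a), Fval,
      ← Fin.sum_univ_eq_sum_range (fun k => x ^ (n - k) * y ^ k) (n + 1)]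
    apply Finset.sum_congr rfl
    intro a _
    ring
end
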